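/- arXiv:2605.30891 — 3 statements merged into one kernel-verified Lean document; each statement's English description precedes it below -/
import Mathlib

section
/- Fix an integer K ≥ 1 and set μ_k = c_μ K^{p/2−1} for all 0 ≤ k < K. Then, with C := 2‖F_0‖ + L (L/c_μ)^{2/(p−2)}, one has min_{1 ≤ i ≤ K} ‖∇f(x_i)‖ ≤ (2 c_μ^{1/p} C^{2−1/p})/√K + σC/(2K), where f(x) = ½‖F(x)‖². -/
set_option maxHeartbeats 1000000

open scoped RealInnerProductSpace


open Set

theorem gn_taylor {E V : Type*} [NormedAddCommGroup E] [NormedSpace ℝ E]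
    [NormedAddCommGroup V] [NormedSpace ℝ V]
    (F : E → V) (J : E → E →L[ℝ] V)
    (hF : ∀ y, HasFDerivAt F (J y) y)
    (L : ℝ)
    (hlip : ∀ y z, ‖J y - J z‖ ≤ L * ‖y - z‖)
    (a : E) (v : E) :
    ‖F (a + v) - F a - J a v‖ ≤ L / 2 * ‖v‖ ^ 2 := by
  set g : ℝ → V := fun t => F (a + t • v) - F a - t • (J a v) with hg
  have hderiv : ∀ t : ℝ, HasDerivAt g (J (a + t • v) v - J a v) t := by
    intro t
    have h1 : HasDerivAt (fun t : ℝ => a + t • v) v t := by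
      simpa using ((hasDerivAt_id t).smul_const v).const_add a
    have h2 : HasDerivAt (fun t : ℝ => F (a + t • v)) (J (a + t • v) v) t := by
      exact (hF (a + t • v)).comp_hasDerivAt t h1
    have h3 := (h2.sub_const (F a)).sub ((hasDerivAt_id t).smul_const (J a v))
    simp only [one_smul] at h3
    exact h3
  have hB : ∀ t : ℝ, HasDerivAt (fun t : ℝ => L * ‖v‖ ^ 2 / 2 * t ^ 2) (L * ‖v‖ ^ 2 * t) t := by
    intro t
    have := (hasDerivAt_pow 2 t).const_mul (L * ‖v‖ ^ 2 / 2)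
    convert this using 1
    · rfl
    · rfl
    simp
    ring
  have key : ∀ u ∈ Icc (0:ℝ) 1, ‖g u‖ ≤ L * ‖v‖ ^ 2 / 2 * u ^ 2 :=
    image_norm_le_of_norm_deriv_right_le_deriv_boundary
      (fun t _ => (hderiv t).continuousAt.continuousWithinAt)
      (fun t _ => (hderiv t).hasDerivWithinAt)
      (by simp [hg]) hB
      (by
        intro t ht
        have h3 : ‖(J (a + t • v) - J a) v‖ ≤ ‖J (a + t • v) - J a‖ * ‖v‖ :=
          (J (a + t • v) - J a).le_opNorm v
        have h4 : ‖J (a + t • v) - J a‖ ≤ L * (t * ‖v‖) := by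
          have := hlip (a + t • v) a
          simpa [norm_smul, abs_of_nonneg ht.1] using this
        calc ‖J (a + t • v) v - J a v‖ = ‖(J (a + t • v) - J a) v‖ := by
              simp [ContinuousLinearMap.sub_apply]
          _ ≤ L * (t * ‖v‖) * ‖v‖ := h3.trans
              (mul_le_mul_of_nonneg_right h4 (norm_nonneg v))
          _ = L * ‖v‖ ^ 2 * t := by ring)
  have := key 1 (by norm_num)
  have e : L * ‖v‖ ^ 2 / 2 = L / 2 * ‖v‖ ^ 2 := by ring
  simpa [hg, e] using this

open scoped RealInnerProductSpace

open ContinuousLinearMap in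
theorem gn_step {E V : Type*} [NormedAddCommGroup E] [InnerProductSpace ℝ E] [CompleteSpace E]
    [NormedAddCommGroup V] [InnerProductSpace ℝ V] [CompleteSpace V]
    (A : E →L[ℝ] V) (F₀ : V) (s : E) (p μ lam : ℝ) (hp : 2 < p) (hμ : 0 < μ)
    (ha : 0 < ‖F₀‖) (hlam : lam = 2 * μ * ‖F₀‖)
    (hopt : ‖adjoint A (F₀ + A s) + (lam * ‖s‖ ^ (p - 2)) • s‖ ≤ lam / 2 * ‖s‖ ^ (p - 1)) :
    ‖F₀ + A s‖ ≤ ‖F₀‖ - μ * ‖s‖ ^ p ∧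
      ‖adjoint A (F₀ + A s)‖ ≤ 3 * μ * ‖F₀‖ * ‖s‖ ^ (p - 1) := by
  rcases eq_or_ne s 0 with rfl | hs
  · have h0 : (0:ℝ) < p - 1 := by linarith
    have e1 : (0:ℝ) ^ (p-1) = 0 := Real.zero_rpow (ne_of_gt h0)
    have e2 : (0:ℝ) ^ (p) = 0 := Real.zero_rpow (by positivity)
    have h1 : ‖adjoint A (F₀ + A 0)‖ ≤ 0 := by
      simpa [e1] using hopt
    constructor
    · simp only [map_zero, add_zero, norm_zero, e2]
      linarith
    · simp only [norm_zero, e1, mul_zero]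
      exact h1
  · have hn : (0:ℝ) < ‖s‖ := norm_pos_iff.mpr hs
    have hlampos : 0 < lam := by rw [hlam]; positivity
    have hrp1 : ‖s‖ ^ (p - 1) * ‖s‖ = ‖s‖ ^ p := by
      rw [← Real.rpow_add_one (ne_of_gt hn)]; ring_nf
    have hrp3 : ‖s‖ ^ (p - 2) * ‖s‖ = ‖s‖ ^ (p - 1) := by
      rw [← Real.rpow_add_one (ne_of_gt hn)]; ring_nf
    have hrp2 : ‖s‖ ^ (p - 2) * (‖s‖ * ‖s‖) = ‖s‖ ^ p := by
      rw [← mul_assoc, hrp3, hrp1]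
    set w : E := (lam * ‖s‖ ^ (p - 2)) • s with hw
    have hwnorm : ‖w‖ = lam * ‖s‖ ^ (p - 1) := by
      rw [hw, norm_smul, Real.norm_eq_abs, abs_of_pos (by positivity), mul_assoc, hrp3]
    constructor
    · have h1 : ⟪adjoint A (F₀ + A s) + w, s⟫ ≤ lam / 2 * ‖s‖ ^ p := by
        calc ⟪adjoint A (F₀ + A s) + w, s⟫ ≤ ‖adjoint A (F₀ + A s) + w‖ * ‖s‖ :=
              real_inner_le_norm _ _
          _ ≤ (lam / 2 * ‖s‖ ^ (p - 1)) * ‖s‖ :=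
              mul_le_mul_of_nonneg_right hopt (norm_nonneg s)
          _ = lam / 2 * ‖s‖ ^ p := by rw [mul_assoc, hrp1]
      have h2 : ⟪adjoint A (F₀ + A s) + w, s⟫
          = ⟪F₀ + A s, A s⟫ + lam * ‖s‖ ^ p := by
        rw [inner_add_left, ContinuousLinearMap.adjoint_inner_left, hw,
          real_inner_smul_left, real_inner_self_eq_norm_mul_norm, mul_assoc, hrp2]
      have h3 : ⟪F₀ + A s, A s⟫ ≤ - (lam / 2 * ‖s‖ ^ p) := by
        rw [h2] at h1; linarith
      have h4 : ‖F₀ + A s‖ * ‖F₀ + A s‖ ≤ ‖F₀ + A s‖ * ‖F₀‖ - lam / 2 * ‖s‖ ^ p := by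
        have e : ‖F₀ + A s‖ * ‖F₀ + A s‖ = ⟪F₀ + A s, F₀⟫ + ⟪F₀ + A s, A s⟫ := by
          rw [← inner_add_right, real_inner_self_eq_norm_mul_norm]
        have := real_inner_le_norm (F₀ + A s) F₀
        rw [e]; linarith
      set r := ‖F₀ + A s‖ with hr
      have hr0 : 0 ≤ r := norm_nonneg _
      have hsp : 0 < ‖s‖ ^ p := Real.rpow_pos_of_pos hn p
      rw [hlam] at h4
      nlinarith [sq_nonneg (‖F₀‖ - r), mul_pos hμ hsp, ha]
    · have h5 : ‖adjoint A (F₀ + A s)‖ ≤ ‖adjoint A (F₀ + A s) + w‖ + ‖w‖ :=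
        norm_le_add_norm_add _ _
      rw [hwnorm] at h5
      rw [hlam] at hopt h5
      linarith

theorem gn_log_eq {X Y : ℝ} (hX : 0 < X) (hY : 0 < Y) (h : Real.log X = Real.log Y) : X = Y :=
  Real.log_injOn_pos (Set.mem_Ioi.mpr hX) (Set.mem_Ioi.mpr hY) h

theorem gn_quad (L μ p n : ℝ) (hL : 0 < L) (hμ : 0 < μ) (hp : 2 < p) (hn : 0 ≤ n) :
    L / 2 * n ^ 2 ≤ max (μ / 2 * n ^ p) (L / 2 * (L / μ) ^ (2 / (p - 2))) := by
  have hp2 : (0:ℝ) < p - 2 := by linarith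
  have hbase : (0:ℝ) < L / μ := div_pos hL hμ
  set ρ : ℝ := (L / μ) ^ (1 / (p - 2)) with hρ
  have hρpos : 0 < ρ := Real.rpow_pos_of_pos hbase _
  have hρpow : ρ ^ (p - 2) = L / μ := by
    rw [hρ, ← Real.rpow_mul hbase.le]
    rw [show 1 / (p - 2) * (p - 2) = 1 by field_simp]
    exact Real.rpow_one _
  have hρ2 : ρ ^ (2:ℕ) = (L / μ) ^ (2 / (p - 2)) := by
    rw [← Real.rpow_natCast ρ 2, hρ, ← Real.rpow_mul hbase.le]
    congr 1
    push_cast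
    ring
  rcases le_total n ρ with h | h
  · refine le_trans ?_ (le_max_right _ _)
    rw [← hρ2]
    have := pow_le_pow_left₀ hn h 2
    nlinarith
  · refine le_trans ?_ (le_max_left _ _)
    have hn' : 0 < n := lt_of_lt_of_le hρpos h
    have key : L / μ ≤ n ^ (p - 2) := by
      rw [← hρpow]; exact Real.rpow_le_rpow hρpos.le h (by linarith)
    have hsplit : n ^ p = n ^ (p - 2) * n ^ (2:ℕ) := by
      rw [← Real.rpow_natCast n 2, ← Real.rpow_add hn']
      norm_num
    rw [hsplit]
    have h2 : L ≤ μ * n ^ (p - 2) := by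
      rw [div_le_iff₀ hμ] at key; linarith [key]
    nlinarith [pow_nonneg hn 2, sq_nonneg n]

theorem gn_Kstep (L c Kr p : ℝ) (hL : 0 < L) (hc : 0 < c) (hKr : 1 ≤ Kr) (hp : 2 < p) :
    (L / (c * Kr ^ (p / 2 - 1))) ^ (2 / (p - 2)) = (L / c) ^ (2 / (p - 2)) / Kr := by
  have hK0 : (0:ℝ) < Kr := by linarith
  have hp2 : (0:ℝ) < p - 2 := by linarith
  have hKe : (0:ℝ) < Kr ^ (p / 2 - 1) := Real.rpow_pos_of_pos hK0 _
  apply gn_log_eq (by positivity) (by positivity)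
  have h1 : Real.log ((L / (c * Kr ^ (p / 2 - 1))) ^ (2 / (p - 2)))
      = 2 / (p - 2) * (Real.log L - (Real.log c + (p / 2 - 1) * Real.log Kr)) := by
    rw [Real.log_rpow (by positivity), Real.log_div hL.ne' (by positivity),
      Real.log_mul hc.ne' hKe.ne', Real.log_rpow hK0]
  have h2 : Real.log ((L / c) ^ (2 / (p - 2)) / Kr)
      = 2 / (p - 2) * (Real.log L - Real.log c) - Real.log Kr := by
    rw [Real.log_div (by positivity) hK0.ne', Real.log_rpow (by positivity),
      Real.log_div hL.ne' hc.ne']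
  rw [h1, h2]
  field_simp
  ring

theorem gn_b3 (C c Kr p n μ : ℝ) (hc : 0 < c) (hC : 0 < C) (hKr : 1 ≤ Kr) (hp : 2 < p)
    (hn : 0 < n) (hμ : μ = c * Kr ^ (p / 2 - 1)) (hW : μ * n ^ p ≤ C / Kr) :
    μ * n ^ (p - 1) ≤ c ^ (1 / p) * C ^ (1 - 1 / p) / Real.sqrt Kr := by
  have hK0 : (0:ℝ) < Kr := by linarith
  have hp0 : (0:ℝ) < p := by linarith
  have hμpos : 0 < μ := by rw [hμ]; positivity
  have e1 : μ * n ^ (p - 1) = μ ^ (1 / p) * (μ * n ^ p) ^ ((p - 1) / p) := by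
    apply gn_log_eq (by positivity) (by positivity)
    have h1 : Real.log (μ * n ^ (p - 1)) = Real.log μ + (p - 1) * Real.log n := by
      rw [Real.log_mul hμpos.ne' (by positivity), Real.log_rpow hn]
    have h2 : Real.log (μ ^ (1 / p) * (μ * n ^ p) ^ ((p - 1) / p))
        = 1 / p * Real.log μ + (p - 1) / p * (Real.log μ + p * Real.log n) := by
      rw [Real.log_mul (by positivity) (by positivity), Real.log_rpow hμpos,
        Real.log_rpow (by positivity), Real.log_mul hμpos.ne' (by positivity),
        Real.log_rpow hn]
    rw [h1, h2]
    field_simp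
    ring
  have e2 : (μ * n ^ p) ^ ((p - 1) / p) ≤ (C / Kr) ^ ((p - 1) / p) :=
    Real.rpow_le_rpow (by positivity) hW (div_nonneg (by linarith) (by linarith))
  have e3 : μ ^ (1 / p) * (C / Kr) ^ ((p - 1) / p)
      = c ^ (1 / p) * C ^ (1 - 1 / p) / Real.sqrt Kr := by
    apply gn_log_eq (by positivity) (by positivity)
    have h1 : Real.log (μ ^ (1 / p) * (C / Kr) ^ ((p - 1) / p))
        = 1 / p * (Real.log c + (p / 2 - 1) * Real.log Kr)
          + (p - 1) / p * (Real.log C - Real.log Kr) := by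
      rw [Real.log_mul (by positivity) (by positivity), Real.log_rpow hμpos,
        Real.log_rpow (by positivity), Real.log_div hC.ne' hK0.ne', hμ,
        Real.log_mul hc.ne' (by positivity), Real.log_rpow hK0]
    have h2 : Real.log (c ^ (1 / p) * C ^ (1 - 1 / p) / Real.sqrt Kr)
        = 1 / p * Real.log c + (1 - 1 / p) * Real.log C - 1 / 2 * Real.log Kr := by
      rw [Real.log_div (by positivity) (by positivity),
        Real.log_mul (by positivity) (by positivity),
        Real.log_rpow hc, Real.log_rpow hC, Real.sqrt_eq_rpow, Real.log_rpow hK0]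
    rw [h1, h2]
    field_simp
    ring
  calc μ * n ^ (p - 1) = μ ^ (1 / p) * (μ * n ^ p) ^ ((p - 1) / p) := e1
    _ ≤ μ ^ (1 / p) * (C / Kr) ^ ((p - 1) / p) :=
        mul_le_mul_of_nonneg_left e2 (by positivity)
    _ = _ := e3

theorem gn_b1 (L C c Kr p n μ : ℝ) (hL : 0 < L) (hc : 0 < c) (hC : 0 < C) (hKr : 1 ≤ Kr)
    (hp : 2 < p) (hn : 0 < n) (hμ : μ = c * Kr ^ (p / 2 - 1)) (hW : μ * n ^ p ≤ C / Kr)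
    (hD : L * (L / c) ^ (2 / (p - 2)) ≤ C) :
    L * n ≤ c ^ (1 / p) * C ^ (1 - 1 / p) / Real.sqrt Kr := by
  have hK0 : (0:ℝ) < Kr := by linarith
  have hp0 : (0:ℝ) < p := by linarith
  have hp2 : (0:ℝ) < p - 2 := by linarith
  have hμpos : 0 < μ := by rw [hμ]; positivity
  set D : ℝ := L * (L / c) ^ (2 / (p - 2)) with hDdef
  have hDpos : 0 < D := by positivity
  have eL : L = c ^ (2 / p) * D ^ ((p - 2) / p) := by
    apply gn_log_eq hL (by positivity)
    have h2 : Real.log (c ^ (2 / p) * D ^ ((p - 2) / p))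
        = 2 / p * Real.log c
          + (p - 2) / p * (Real.log L + 2 / (p - 2) * (Real.log L - Real.log c)) := by
      rw [Real.log_mul (by positivity) (by positivity), Real.log_rpow hc,
        Real.log_rpow hDpos, hDdef, Real.log_mul hL.ne' (by positivity),
        Real.log_rpow (by positivity), Real.log_div hL.ne' hc.ne']
    rw [h2]
    field_simp
    ring
  have hLle : L ≤ c ^ (2 / p) * C ^ ((p - 2) / p) := by
    rw [eL]
    exact mul_le_mul_of_nonneg_left
      (Real.rpow_le_rpow hDpos.le hD (div_nonneg (by linarith) (by linarith)))
      (by positivity)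
  have hWn : n ^ p ≤ C / (c * Kr ^ (p / 2)) := by
    have e : C / Kr / μ = C / (c * Kr ^ (p / 2)) := by
      apply gn_log_eq (by positivity) (by positivity)
      have h1 : Real.log (C / Kr / μ)
          = Real.log C - Real.log Kr - (Real.log c + (p / 2 - 1) * Real.log Kr) := by
        rw [Real.log_div (by positivity) hμpos.ne', Real.log_div hC.ne' hK0.ne', hμ,
          Real.log_mul hc.ne' (by positivity), Real.log_rpow hK0]
      have h2 : Real.log (C / (c * Kr ^ (p / 2)))
          = Real.log C - (Real.log c + p / 2 * Real.log Kr) := by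
        rw [Real.log_div hC.ne' (by positivity), Real.log_mul hc.ne' (by positivity),
          Real.log_rpow hK0]
      rw [h1, h2]
      ring
    rw [← e, le_div_iff₀ hμpos, mul_comm]
    exact hW
  have hnle : n ≤ (C / (c * Kr ^ (p / 2))) ^ (1 / p) := by
    have h := Real.rpow_le_rpow (by positivity : (0:ℝ) ≤ n ^ p) hWn
      (by positivity : (0:ℝ) ≤ 1 / p)
    rwa [← Real.rpow_mul hn.le, mul_one_div, div_self hp0.ne', Real.rpow_one] at h
  have final : c ^ (2 / p) * C ^ ((p - 2) / p) * (C / (c * Kr ^ (p / 2))) ^ (1 / p)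
      = c ^ (1 / p) * C ^ (1 - 1 / p) / Real.sqrt Kr := by
    apply gn_log_eq (by positivity) (by positivity)
    have h1 : Real.log (c ^ (2 / p) * C ^ ((p - 2) / p) * (C / (c * Kr ^ (p / 2))) ^ (1 / p))
        = 2 / p * Real.log c + (p - 2) / p * Real.log C
          + 1 / p * (Real.log C - (Real.log c + p / 2 * Real.log Kr)) := by
      rw [Real.log_mul (by positivity) (by positivity),
        Real.log_mul (by positivity) (by positivity),
        Real.log_rpow hc, Real.log_rpow hC, Real.log_rpow (by positivity),
        Real.log_div hC.ne' (by positivity), Real.log_mul hc.ne' (by positivity),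
        Real.log_rpow hK0]
    have h2 : Real.log (c ^ (1 / p) * C ^ (1 - 1 / p) / Real.sqrt Kr)
        = 1 / p * Real.log c + (1 - 1 / p) * Real.log C - 1 / 2 * Real.log Kr := by
      rw [Real.log_div (by positivity) (by positivity),
        Real.log_mul (by positivity) (by positivity),
        Real.log_rpow hc, Real.log_rpow hC, Real.sqrt_eq_rpow, Real.log_rpow hK0]
    rw [h1, h2]
    field_simp
    ring
  calc L * n ≤ (c ^ (2 / p) * C ^ ((p - 2) / p)) * n :=
        mul_le_mul_of_nonneg_right hLle hn.le
    _ ≤ (c ^ (2 / p) * C ^ ((p - 2) / p)) * (C / (c * Kr ^ (p / 2))) ^ (1 / p) :=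
        mul_le_mul_of_nonneg_left hnle (by positivity)
    _ = _ := final

/-- Fixed-horizon rate for the higher-order regularized Gauss–Newton method with
`μ_k = c_μ K^{p/2-1}` for `0 ≤ k < K`: with `C := 2‖F_0‖ + L (L/c_μ)^{2/(p-2)}`,
`min_{1 ≤ i ≤ K} ‖∇f(x_i)‖ ≤ 2 c_μ^{1/p} C^{2-1/p}/√K + σC/(2K)`,
where `f(x) = ½‖F(x)‖²` so that `∇f(x) = J(x)ᵀ F(x)`. -/
theorem gn_rate_fixed_horizon
    {E V : Type*} [NormedAddCommGroup E] [InnerProductSpace ℝ E] [CompleteSpace E]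
    [NormedAddCommGroup V] [InnerProductSpace ℝ V] [CompleteSpace V]
    (F : E → V) (J : E → E →L[ℝ] V)
    (hF : ∀ y, HasFDerivAt F (J y) y)
    (L σ : ℝ) (hL : 0 < L) (hσ : 0 < σ)
    (hlip : ∀ y z, ‖J y - J z‖ ≤ L * ‖y - z‖)
    (hJbdd : ∀ y, ‖J y‖ ≤ σ)
    (p : ℝ) (hp : 2 < p)
    (c : ℝ) (hc : 0 < c)
    (K : ℕ) (hK : 1 ≤ K)
    (mu : ℕ → ℝ) (hmu : ∀ k, 0 < mu k)
    (hmudef : ∀ k < K, mu k = c * (K : ℝ) ^ (p / 2 - 1))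
    (x s : ℕ → E)
    (hx : ∀ k, x (k + 1) = x k + s k)
    (hFpos : ∀ k, 0 < ‖F (x k)‖)
    (lam : ℕ → ℝ) (hlamdef : ∀ k, lam k = 2 * mu k * ‖F (x k)‖)
    (hopt : ∀ k,
      ‖ContinuousLinearMap.adjoint (J (x k)) (F (x k) + J (x k) (s k)) +
          (lam k * ‖s k‖ ^ (p - 2)) • s k‖ ≤ lam k / 2 * ‖s k‖ ^ (p - 1))
    (C : ℝ) (hC : C = 2 * ‖F (x 0)‖ + L * (L / c) ^ (2 / (p - 2))) :
    (Finset.Icc 1 K).inf' (Finset.nonempty_Icc.mpr hK)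
        (fun i => ‖ContinuousLinearMap.adjoint (J (x i)) (F (x i))‖) ≤
      2 * c ^ ((1 : ℝ) / p) * C ^ (2 - 1 / p) / Real.sqrt K + σ * C / (2 * (K : ℝ)) := by
  have hp2 : (0:ℝ) < p - 2 := by linarith
  have hp0 : (0:ℝ) < p := by linarith
  have hKr : (1:ℝ) ≤ (K:ℝ) := by exact_mod_cast hK
  have hK0 : (0:ℝ) < (K:ℝ) := by linarith
  set μ : ℝ := c * (K:ℝ) ^ (p / 2 - 1) with hμdef
  have hμpos : 0 < μ := by rw [hμdef]; positivity
  have hCpos : 0 < C := by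
    have h1 := hFpos 0
    have h2 : 0 < L * (L / c) ^ (2 / (p - 2)) := by positivity
    rw [hC]; linarith
  have hDleC : L * (L / c) ^ (2 / (p - 2)) ≤ C := by
    have := hFpos 0; rw [hC]; linarith
  have hqs : (L / μ) ^ (2 / (p - 2)) = (L / c) ^ (2 / (p - 2)) / (K:ℝ) := by
    rw [hμdef]; exact gn_Kstep L c (K:ℝ) p hL hc hKr hp
  set Bs : ℝ := L / 2 * ((L / c) ^ (2 / (p - 2)) / (K:ℝ)) with hBs
  have hBsnn : 0 ≤ Bs := by rw [hBs]; positivity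
  -- per-step estimates
  have hstep : ∀ k, k < K →
      (‖F (x k) + J (x k) (s k)‖ ≤ ‖F (x k)‖ - μ * ‖s k‖ ^ p ∧
        ‖ContinuousLinearMap.adjoint (J (x k)) (F (x k) + J (x k) (s k))‖
          ≤ 3 * μ * ‖F (x k)‖ * ‖s k‖ ^ (p - 1)) := by
    intro k hk
    refine gn_step (J (x k)) (F (x k)) (s k) p μ (lam k) hp hμpos (hFpos k) ?_ (hopt k)
    rw [hlamdef k, hmudef k hk]
  have htay : ∀ k, ‖F (x (k+1)) - F (x k) - J (x k) (s k)‖ ≤ L / 2 * ‖s k‖ ^ 2 := by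
    intro k
    rw [hx k]
    exact gn_taylor F J hF L hlip (x k) (s k)
  have hquad : ∀ k, L / 2 * ‖s k‖ ^ 2
      ≤ max (μ / 2 * ‖s k‖ ^ p) Bs := by
    intro k
    have := gn_quad L μ p ‖s k‖ hL hμpos hp (norm_nonneg _)
    rwa [hqs] at this
  have hdesc : ∀ k, k < K →
      ‖F (x (k+1))‖ + μ / 2 * ‖s k‖ ^ p ≤ ‖F (x k)‖ + Bs := by
    intro k hk
    have h1 : ‖F (x (k+1))‖ ≤ ‖F (x k) + J (x k) (s k)‖ + L / 2 * ‖s k‖ ^ 2 := by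
      have e : F (x (k+1)) = (F (x k) + J (x k) (s k))
          + (F (x (k+1)) - F (x k) - J (x k) (s k)) := by abel
      calc ‖F (x (k+1))‖
          = ‖(F (x k) + J (x k) (s k)) + (F (x (k+1)) - F (x k) - J (x k) (s k))‖ := by
            rw [← e]
        _ ≤ ‖F (x k) + J (x k) (s k)‖ + ‖F (x (k+1)) - F (x k) - J (x k) (s k)‖ :=
            norm_add_le _ _
        _ ≤ ‖F (x k) + J (x k) (s k)‖ + L / 2 * ‖s k‖ ^ 2 := by
            linarith [htay k]
    have h2 := (hstep k hk).1
    have h3 : L / 2 * ‖s k‖ ^ 2 ≤ μ / 2 * ‖s k‖ ^ p + Bs := by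
      refine le_trans (hquad k) (max_le ?_ ?_)
      · have : (0:ℝ) ≤ μ / 2 * ‖s k‖ ^ p := by positivity
        linarith [hBsnn, this]
      · have : (0:ℝ) ≤ μ / 2 * ‖s k‖ ^ p := by positivity
        linarith
    linarith
  -- telescoping
  have hind : ∀ j, j ≤ K →
      ‖F (x j)‖ + ∑ k ∈ Finset.range j, μ / 2 * ‖s k‖ ^ p ≤ ‖F (x 0)‖ + j * Bs := by
    intro j
    induction j with
    | zero => intro _; simp
    | succ j ih =>
      intro hj
      have hjK : j < K := hj
      have h1 := ih (le_of_lt hjK)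
      have h2 := hdesc j hjK
      rw [Finset.sum_range_succ]
      push_cast
      linarith
  have hC2 : C / 2 = ‖F (x 0)‖ + L / 2 * (L / c) ^ (2 / (p - 2)) := by rw [hC]; ring
  have hKBs : (K:ℝ) * Bs = L / 2 * (L / c) ^ (2 / (p - 2)) := by
    rw [hBs]; field_simp
  have Fb : ∀ j, j ≤ K → ‖F (x j)‖ ≤ C / 2 := by
    intro j hj
    have h1 := hind j hj
    have h2 : (0:ℝ) ≤ ∑ k ∈ Finset.range j, μ / 2 * ‖s k‖ ^ p :=
      Finset.sum_nonneg fun k _ => by positivity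
    have h3 : (j:ℝ) * Bs ≤ (K:ℝ) * Bs := by
      have : (j:ℝ) ≤ (K:ℝ) := by exact_mod_cast hj
      exact mul_le_mul_of_nonneg_right this hBsnn
    rw [hC2]
    linarith [hKBs ▸ h3]
  have htotal : ∑ k ∈ Finset.range K, μ / 2 * ‖s k‖ ^ p ≤ C / 2 := by
    have h1 := hind K le_rfl
    have h2 := norm_nonneg (F (x K))
    rw [hC2]
    linarith [hKBs]
  -- minimal step
  obtain ⟨m, hmmem, hmin⟩ := Finset.exists_min_image (Finset.range K)
    (fun k => ‖s k‖) ⟨0, Finset.mem_range.mpr (by omega)⟩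
  have hmlt : m < K := Finset.mem_range.mp hmmem
  have hW : μ * ‖s m‖ ^ p ≤ C / (K:ℝ) := by
    have each : ∀ k ∈ Finset.range K, μ / 2 * ‖s m‖ ^ p ≤ μ / 2 * ‖s k‖ ^ p := by
      intro k hk
      exact mul_le_mul_of_nonneg_left
        (Real.rpow_le_rpow (norm_nonneg _) (hmin k hk) (by linarith)) (by positivity)
    have hcard := Finset.card_nsmul_le_sum (Finset.range K)
      (fun k => μ / 2 * ‖s k‖ ^ p) (μ / 2 * ‖s m‖ ^ p) each
    rw [Finset.card_range, nsmul_eq_mul] at hcard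
    have h4 : (K:ℝ) * (μ * ‖s m‖ ^ p) ≤ C := by
      have := le_trans hcard htotal
      nlinarith [this]
    rw [le_div_iff₀ hK0]
    linarith [h4, mul_comm (K:ℝ) (μ * ‖s m‖ ^ p)]
  -- the gradient at index m+1
  have hmem : m + 1 ∈ Finset.Icc 1 K := Finset.mem_Icc.mpr ⟨by omega, by omega⟩
  have hRnn : (0:ℝ) ≤ 2 * c ^ ((1:ℝ) / p) * C ^ (2 - 1 / p) / Real.sqrt K
      + σ * C / (2 * (K:ℝ)) := by
    have h1 : (0:ℝ) ≤ 2 * c ^ ((1:ℝ) / p) * C ^ (2 - 1 / p) :=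
      mul_nonneg (mul_nonneg (by norm_num) (Real.rpow_nonneg hc.le _))
        (Real.rpow_nonneg hCpos.le _)
    have h2 : (0:ℝ) ≤ σ * C := mul_nonneg hσ.le hCpos.le
    have h3 : (0:ℝ) ≤ Real.sqrt K := Real.sqrt_nonneg _
    positivity
  refine le_trans (Finset.inf'_le _ hmem) ?_
  show ‖ContinuousLinearMap.adjoint (J (x (m+1))) (F (x (m+1)))‖ ≤ _
  by_cases hs0 : s m = 0
  · have h0 := (hstep m hmlt).2
    rw [hs0] at h0
    simp only [norm_zero] at h0
    rw [Real.zero_rpow (ne_of_gt (by linarith : (0:ℝ) < p - 1)), mul_zero] at h0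
    have hx1 : x (m+1) = x m := by rw [hx m, hs0, add_zero]
    rw [hx1]
    have : ‖ContinuousLinearMap.adjoint (J (x m)) (F (x m))‖ ≤ 0 := by
      simpa using h0
    linarith [hRnn, this]
  · set n : ℝ := ‖s m‖ with hn
    have hnpos : 0 < n := norm_pos_iff.mpr hs0
    set A₀ := J (x m) with hA0
    set A₁ := J (x (m+1)) with hA1
    set F₀ := F (x m) with hF0
    set F₁ := F (x (m+1)) with hF1
    have hT3 := (hstep m hmlt).2
    have hT2' : ‖F₁ - F₀ - A₀ (s m)‖ ≤ L / 2 * n ^ 2 := htay m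
    have hadj_sub : ContinuousLinearMap.adjoint (A₁ - A₀)
        = ContinuousLinearMap.adjoint A₁ - ContinuousLinearMap.adjoint A₀ := map_sub _ _ _
    have hdec : ContinuousLinearMap.adjoint A₁ F₁
        = ContinuousLinearMap.adjoint (A₁ - A₀) F₁
          + ContinuousLinearMap.adjoint A₀ (F₁ - F₀ - A₀ (s m))
          + ContinuousLinearMap.adjoint A₀ (F₀ + A₀ (s m)) := by
      rw [hadj_sub]
      simp only [ContinuousLinearMap.sub_apply, map_sub, map_add]
      abel
    have hnorm_adj : ∀ (B : E →L[ℝ] V), ‖ContinuousLinearMap.adjoint B‖ = ‖B‖ := fun B =>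
      ContinuousLinearMap.adjoint.norm_map B
    have hxdiff : x (m+1) - x m = s m := by rw [hx m]; abel
    have hT1 : ‖ContinuousLinearMap.adjoint (A₁ - A₀) F₁‖ ≤ (L * n) * (C / 2) := by
      calc ‖ContinuousLinearMap.adjoint (A₁ - A₀) F₁‖
          ≤ ‖ContinuousLinearMap.adjoint (A₁ - A₀)‖ * ‖F₁‖ :=
            ContinuousLinearMap.le_opNorm _ _
        _ = ‖A₁ - A₀‖ * ‖F₁‖ := by rw [hnorm_adj]
        _ ≤ (L * n) * (C / 2) := by
            refine mul_le_mul ?_ (Fb (m+1) (by omega)) (norm_nonneg _) (by positivity)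
            have := hlip (x (m+1)) (x m)
            rwa [hxdiff] at this
    have hT2 : ‖ContinuousLinearMap.adjoint A₀ (F₁ - F₀ - A₀ (s m))‖ ≤ σ * (L / 2 * n ^ 2) := by
      calc ‖ContinuousLinearMap.adjoint A₀ (F₁ - F₀ - A₀ (s m))‖
          ≤ ‖ContinuousLinearMap.adjoint A₀‖ * ‖F₁ - F₀ - A₀ (s m)‖ :=
            ContinuousLinearMap.le_opNorm _ _
        _ = ‖A₀‖ * ‖F₁ - F₀ - A₀ (s m)‖ := by rw [hnorm_adj]
        _ ≤ σ * (L / 2 * n ^ 2) :=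
            mul_le_mul (hJbdd (x m)) hT2' (norm_nonneg _) hσ.le
    -- numeric bounds
    have hb1 : L * n ≤ c ^ ((1:ℝ) / p) * C ^ (1 - 1 / p) / Real.sqrt K :=
      gn_b1 L C c (K:ℝ) p n μ hL hc hCpos hKr hp hnpos hμdef hW hDleC
    have hb3 : μ * n ^ (p - 1) ≤ c ^ ((1:ℝ) / p) * C ^ (1 - 1 / p) / Real.sqrt K :=
      gn_b3 C c (K:ℝ) p n μ hc hCpos hKr hp hnpos hμdef hW
    have hquadm : L / 2 * n ^ 2 ≤ max (μ / 2 * n ^ p) Bs := hquad m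
    have hb2 : L / 2 * n ^ 2 ≤ C / (2 * (K:ℝ)) := by
      refine le_trans hquadm (max_le ?_ ?_)
      · calc μ / 2 * n ^ p ≤ (C / (K:ℝ)) / 2 := by linarith [hW]
          _ = C / (2 * (K:ℝ)) := by ring
      · rw [hBs]
        calc L / 2 * ((L / c) ^ (2 / (p - 2)) / (K:ℝ))
            = (L * (L / c) ^ (2 / (p - 2))) / (2 * (K:ℝ)) := by ring
          _ ≤ C / (2 * (K:ℝ)) := by gcongr
    have hF0C : ‖F₀‖ ≤ C / 2 := Fb m hmlt.le
    have hμn : (0:ℝ) ≤ μ * n ^ (p - 1) := by positivity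
    have hT3' : ‖ContinuousLinearMap.adjoint A₀ (F₀ + A₀ (s m))‖
        ≤ 3 * (C / 2) * (μ * n ^ (p - 1)) := by
      refine le_trans hT3 ?_
      nlinarith [hμn, hF0C, hμpos]
    set G : ℝ := c ^ ((1:ℝ)/p) * C ^ (1 - 1/p) / Real.sqrt (K:ℝ) with hG
    have htot : ‖ContinuousLinearMap.adjoint A₁ F₁‖
        ≤ (L * n) * (C/2) + σ * (L/2 * n^2) + 3*(C/2)*(μ*n^(p-1)) := by
      rw [hdec]
      refine le_trans (norm_add_le _ _) ?_
      refine le_trans (add_le_add_left (norm_add_le _ _) _) ?_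
      exact add_le_add (add_le_add hT1 hT2) hT3'
    have hGnn : (0:ℝ) ≤ G := by
      rw [hG]
      exact div_nonneg (mul_nonneg (Real.rpow_nonneg hc.le _) (Real.rpow_nonneg hCpos.le _))
        (Real.sqrt_nonneg _)
    have hfin1 : (L*n)*(C/2) ≤ G*(C/2) := mul_le_mul_of_nonneg_right hb1 (by positivity)
    have hfin2 : σ*(L/2*n^2) ≤ σ*(C/(2*(K:ℝ))) := mul_le_mul_of_nonneg_left hb2 hσ.le
    have hfin3 : 3*(C/2)*(μ*n^(p-1)) ≤ 3*(C/2)*G :=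
      mul_le_mul_of_nonneg_left hb3 (by positivity)
    have hCC : C ^ (2 - 1/p) = C * C ^ (1 - 1/p) := by
      rw [show (2:ℝ) - 1/p = 1 + (1 - 1/p) by ring, Real.rpow_add hCpos, Real.rpow_one]
    have hfinal : G*(C/2) + σ*(C/(2*(K:ℝ))) + 3*(C/2)*G
        = 2 * c ^ ((1:ℝ)/p) * C ^ (2 - 1/p) / Real.sqrt (K:ℝ) + σ * C / (2*(K:ℝ)) := by
      rw [hCC, hG]; ring
    linarith [htot, hfin1, hfin2, hfin3, hfinal]
end

section
/- For every index i, defining e_i := ‖g_i − ∇f(x_i)‖, the iterates satisfy f(x_{i+1}) − f(x_i) ≤ L‖s_i‖² − λ_i‖s_i‖^p + e_i²/(2L) and ‖∇f(x_i)‖ ≤ λ_i‖s_i‖^{p−1} + e_i. -/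
open scoped RealInnerProductSpace

lemma descent_step {E : Type*} [NormedAddCommGroup E] [InnerProductSpace ℝ E] [CompleteSpace E]
    (f : E → ℝ) (f' : E → E) (hf : ∀ y, HasGradientAt f (f' y) y) (L : ℝ) (hL : 0 ≤ L)
    (hlip : ∀ y z, ‖f' y - f' z‖ ≤ L * ‖y - z‖) (x s : E) :
    f (x + s) ≤ f x + ⟪f' x, s⟫ + L / 2 * ‖s‖ ^ 2 := by
  have hφ : ∀ t : ℝ, HasDerivAt (fun t : ℝ => f (x + t • s)) (⟪f' (x + t • s), s⟫) t := by
    intro t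
    have hu : HasDerivAt (fun t : ℝ => x + t • s) s t := by
      simpa using ((hasDerivAt_id t).smul_const s).const_add x
    have := ((hf (x + t • s)).hasFDerivAt).comp_hasDerivAt t hu
    simp at this; exact this
  have hB : ∀ t : ℝ, HasDerivAt
      (fun t : ℝ => f x + t * ⟪f' x, s⟫ + L / 2 * t ^ 2 * ‖s‖ ^ 2)
      (⟪f' x, s⟫ + L * t * ‖s‖ ^ 2) t := by
    intro t
    have h1 : HasDerivAt (fun t : ℝ => f x + t * ⟪f' x, s⟫) (⟪f' x, s⟫) t := by
      simpa using ((hasDerivAt_id t).mul_const (⟪f' x, s⟫)).const_add (f x)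
    have h2 : HasDerivAt (fun t : ℝ => L / 2 * t ^ 2 * ‖s‖ ^ 2) (L * t * ‖s‖ ^ 2) t := by
      have := (((hasDerivAt_id t).pow 2).const_mul (L / 2)).mul_const (‖s‖ ^ 2)
      convert this using 1
      · rfl
      · rfl
      · funext y; simp
      simp only [id_eq]
      push_cast
      ring
    exact h1.add h2
  have key := image_le_of_deriv_right_le_deriv_boundary
    (f := fun t : ℝ => f (x + t • s)) (f' := fun t : ℝ => ⟪f' (x + t • s), s⟫)
    (a := 0) (b := 1)
    (B := fun t : ℝ => f x + t * ⟪f' x, s⟫ + L / 2 * t ^ 2 * ‖s‖ ^ 2)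
    (B' := fun t : ℝ => ⟪f' x, s⟫ + L * t * ‖s‖ ^ 2)
    (fun t _ => (hφ t).continuousAt.continuousWithinAt)
    (fun t _ => (hφ t).hasDerivWithinAt)
    (by simp)
    (fun t _ => (hB t).continuousAt.continuousWithinAt)
    (fun t _ => (hB t).hasDerivWithinAt)
    (by
      intro t ht
      have h1 : ⟪f' (x + t • s), s⟫ - ⟪f' x, s⟫ = ⟪f' (x + t • s) - f' x, s⟫ := by
        rw [inner_sub_left]
      have h2 : ⟪f' (x + t • s) - f' x, s⟫ ≤ ‖f' (x + t • s) - f' x‖ * ‖s‖ :=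
        real_inner_le_norm _ _
      have h3 : ‖f' (x + t • s) - f' x‖ ≤ L * (t * ‖s‖) := by
        have := hlip (x + t • s) x
        simpa [norm_smul, abs_of_nonneg ht.1] using this
      have h4 : ‖f' (x + t • s) - f' x‖ * ‖s‖ ≤ L * (t * ‖s‖) * ‖s‖ :=
        mul_le_mul_of_nonneg_right h3 (norm_nonneg s)
      have h5 : L * (t * ‖s‖) * ‖s‖ = L * t * ‖s‖ ^ 2 := by ring
      show ⟪f' (x + t • s), s⟫ ≤ ⟪f' x, s⟫ + L * t * ‖s‖ ^ 2
      linarith)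
  have := key (x := 1) (by norm_num : (1:ℝ) ∈ Set.Icc (0:ℝ) 1)
  simpa using this

open scoped Classical

/-- One-step bounds for higher-order regularized SGD-type updates with inexact
gradients: with `e_i := ‖g_i - ∇f(x_i)‖`,
`f(x_{i+1}) - f(x_i) ≤ L‖s_i‖² - λ_i‖s_i‖^p + e_i²/(2L)` and
`‖∇f(x_i)‖ ≤ λ_i‖s_i‖^{p-1} + e_i`. -/
theorem hor_sgd_step_bounds
    {E : Type*} [NormedAddCommGroup E] [InnerProductSpace ℝ E] [CompleteSpace E]
    (f : E → ℝ) (f' : E → E)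
    (hf : ∀ y, HasGradientAt f (f' y) y)
    (L : ℝ) (hL : 0 < L)
    (hlip : ∀ y z, ‖f' y - f' z‖ ≤ L * ‖y - z‖)
    (p : ℝ) (hp : 2 < p)
    (lam : ℕ → ℝ) (hlam : ∀ k, 0 < lam k)
    (g : ℕ → E) (x s : ℕ → E)
    (hs : ∀ k, s k = if g k = 0 then 0
      else -((lam k * ‖g k‖ ^ (p - 2)) ^ (-(1 : ℝ) / (p - 1))) • g k)
    (hx : ∀ k, x (k + 1) = x k + s k)
    (i : ℕ) :
    f (x (i + 1)) - f (x i) ≤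
        L * ‖s i‖ ^ 2 - lam i * ‖s i‖ ^ p + ‖g i - f' (x i)‖ ^ 2 / (2 * L) ∧
      ‖f' (x i)‖ ≤ lam i * ‖s i‖ ^ (p - 1) + ‖g i - f' (x i)‖ := by
  have hp2ne : p - 2 ≠ 0 := by linarith
  have hp1ne : p - 1 ≠ 0 := by linarith
  have hpne : p ≠ 0 := by linarith
  -- Key identity : g i = -((lam i * ‖s i‖ ^ (p - 2)) • s i)
  have key : g i = -((lam i * ‖s i‖ ^ (p - 2)) • s i) := by
    by_cases hg : g i = 0
    · have hsi : s i = 0 := by rw [hs i, if_pos hg]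
      rw [hg, hsi]; simp
    · have hgpos : 0 < ‖g i‖ := norm_pos_iff.2 hg
      set A := lam i * ‖g i‖ ^ (p - 2) with hA
      have hAp : 0 < A := mul_pos (hlam i) (Real.rpow_pos_of_pos hgpos _)
      set t := A ^ (-(1:ℝ) / (p - 1)) with hT
      have ht : 0 < t := Real.rpow_pos_of_pos hAp _
      have hsi : s i = (-t) • g i := by rw [hs i, if_neg hg]
      have hns : ‖s i‖ = t * ‖g i‖ := by
        rw [hsi, norm_smul, norm_neg, Real.norm_of_nonneg ht.le]
      have htp : t ^ (p - 1) = A⁻¹ := by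
        rw [hT, ← Real.rpow_mul hAp.le, div_mul_cancel₀ _ hp1ne]
        exact Real.rpow_neg_one A
      have hcoef : lam i * (t * ‖g i‖) ^ (p - 2) * t = 1 := by
        rw [Real.mul_rpow ht.le (norm_nonneg _)]
        have ht2 : t ^ (p - 2) * t = t ^ (p - 1) := by
          nth_rewrite 2 [← Real.rpow_one t]
          rw [← Real.rpow_add ht]
          ring_nf
        calc lam i * (t ^ (p - 2) * ‖g i‖ ^ (p - 2)) * t
            = (lam i * ‖g i‖ ^ (p - 2)) * (t ^ (p - 2) * t) := by ring
          _ = A * A⁻¹ := by rw [ht2, htp, hA]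
          _ = 1 := mul_inv_cancel₀ hAp.ne'
      rw [hns, hsi, smul_smul, ← neg_smul]
      have : -(lam i * (t * ‖g i‖) ^ (p - 2) * -t) = 1 := by
        rw [← hcoef]; ring
      rw [this, one_smul]
  -- norm of g i
  have hnormg : ‖g i‖ = lam i * ‖s i‖ ^ (p - 1) := by
    rw [key, norm_neg, norm_smul, Real.norm_of_nonneg
      (mul_nonneg (hlam i).le (Real.rpow_nonneg (norm_nonneg _) _))]
    by_cases hs0 : s i = 0
    · simp [hs0, Real.zero_rpow hp2ne, Real.zero_rpow hp1ne]
    · have hpos : 0 < ‖s i‖ := norm_pos_iff.2 hs0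
      rw [mul_assoc]
      congr 1
      have : ‖s i‖ ^ (p - 2) * ‖s i‖ = ‖s i‖ ^ (p - 2 + 1) := by
        rw [Real.rpow_add hpos, Real.rpow_one]
      rw [this]; ring_nf
  -- inner product of g i with s i
  have hinner : ⟪g i, s i⟫ = -(lam i * ‖s i‖ ^ p) := by
    rw [key, inner_neg_left, real_inner_smul_left, real_inner_self_eq_norm_sq]
    congr 1
    by_cases hs0 : s i = 0
    · simp [hs0, Real.zero_rpow hp2ne, Real.zero_rpow hpne]
    · have hpos : 0 < ‖s i‖ := norm_pos_iff.2 hs0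
      rw [mul_assoc]
      congr 1
      have h2 : ‖s i‖ ^ (2:ℕ) = ‖s i‖ ^ ((2:ℕ):ℝ) := (Real.rpow_natCast _ 2).symm
      rw [h2, ← Real.rpow_add hpos]
      norm_num
  constructor
  · -- descent bound
    have hdesc := descent_step f f' hf L hL.le hlip (x i) (s i)
    rw [hx i]
    set e := ‖g i - f' (x i)‖ with he
    have hinner2 : ⟪f' (x i), s i⟫ = ⟪g i, s i⟫ + ⟪f' (x i) - g i, s i⟫ := by
      rw [← inner_add_left]; congr 1; abel
    have hCS : ⟪f' (x i) - g i, s i⟫ ≤ e * ‖s i‖ := by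
      have h := real_inner_le_norm (f' (x i) - g i) (s i)
      rwa [norm_sub_rev] at h
    have hyoung : e * ‖s i‖ ≤ e ^ 2 / (2 * L) + L / 2 * ‖s i‖ ^ 2 := by
      have h2L : (0:ℝ) < 2 * L := by linarith
      have hiden : e ^ 2 / (2 * L) + L / 2 * ‖s i‖ ^ 2 - e * ‖s i‖
          = (e - L * ‖s i‖) ^ 2 / (2 * L) := by
        field_simp; ring
      have hnn : 0 ≤ (e - L * ‖s i‖) ^ 2 / (2 * L) :=
        div_nonneg (sq_nonneg _) h2L.le
      linarith
    rw [hinner2, hinner] at hdesc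
    linarith
  · -- gradient bound
    have h1 : ‖f' (x i)‖ - ‖g i‖ ≤ ‖f' (x i) - g i‖ := norm_sub_norm_le _ _
    rw [norm_sub_rev] at h1
    rw [← hnormg]
    linarith
end

section
/- Suppose θ = 1/(1+b) and the errors satisfy the variance-free recursion E[e_{i+1}² − (1−θ)e_i²] ≤ L²((1−θ)/b)·E[‖s_i‖²] for all i, with e_0 = 0. Then for every k ≥ 1, (1/k) ∑_{i=0}^{k−1} E[‖∇f(x_i)‖] ≤ (2/k) · (∑_{i=0}^{k−1} λ_i)^{1/p} · (2Δ + 4L ∑_{i=0}^{k−1} (4L/λ_i)^{2/(p−2)})^{(p−1)/p}, for any choice of positive parameters λ_0, …, λ_{k−1}. -/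
open scoped Classical
open MeasureTheory


lemma descent_lemma {E : Type*} [NormedAddCommGroup E] [InnerProductSpace ℝ E] [CompleteSpace E]
    (f : E → ℝ) (f' : E → E) (hf : ∀ y, HasGradientAt f (f' y) y)
    (L : ℝ) (hL : 0 ≤ L) (hlip : ∀ y z, ‖f' y - f' z‖ ≤ L * ‖y - z‖)
    (y v : E) : f (y + v) ≤ f y + inner ℝ (f' y) v + L / 2 * ‖v‖ ^ 2 := by
  set φ : ℝ → ℝ := fun t => f (y + t • v) - t * inner ℝ (f' y) v - t ^ 2 * (L / 2 * ‖v‖ ^ 2) with hφ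
  have hder : ∀ t : ℝ, HasDerivAt φ
      ((inner ℝ (f' (y + t • v)) v : ℝ) - inner ℝ (f' y) v - (2 * t) * (L / 2 * ‖v‖ ^ 2)) t := by
    intro t
    have hc : HasDerivAt (fun t : ℝ => y + t • v) v t := by
      simpa using ((hasDerivAt_id t).smul_const v).const_add y
    have h1 : HasDerivAt (fun t : ℝ => f (y + t • v)) (inner ℝ (f' (y + t • v)) v : ℝ) t := by
      have := ((hf (y + t • v)).hasFDerivAt).comp_hasDerivAt t hc
      exact this
    have h2 : HasDerivAt (fun t : ℝ => t * (inner ℝ (f' y) v : ℝ)) (inner ℝ (f' y) v : ℝ) t := by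
      simpa using (hasDerivAt_id t).mul_const (inner ℝ (f' y) v : ℝ)
    have h3 : HasDerivAt (fun t : ℝ => t ^ 2 * (L / 2 * ‖v‖ ^ 2)) ((2 * t) * (L / 2 * ‖v‖ ^ 2)) t := by
      have := (hasDerivAt_pow 2 t).mul_const (L / 2 * ‖v‖ ^ 2)
      simpa [mul_comm] using this
    exact (h1.sub h2).sub h3
  have hmono : AntitoneOn φ (Set.Icc (0:ℝ) 1) := by
    apply antitoneOn_of_hasDerivWithinAt_nonpos (convex_Icc 0 1)
      (fun t _ => (hder t).continuousAt.continuousWithinAt)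
      (fun t ht => ((hder t).hasDerivWithinAt))
    intro t ht
    rw [interior_Icc] at ht
    have h0t : 0 < t := ht.1
    have hineq : (inner ℝ (f' (y + t • v)) v : ℝ) - inner ℝ (f' y) v ≤ L * t * ‖v‖ ^ 2 := by
      have h1 : (inner ℝ (f' (y + t • v)) v : ℝ) - inner ℝ (f' y) v
          = inner ℝ (f' (y + t • v) - f' y) v := by rw [inner_sub_left]
      rw [h1]
      calc (inner ℝ (f' (y + t • v) - f' y) v : ℝ) ≤ ‖f' (y + t • v) - f' y‖ * ‖v‖ :=
            real_inner_le_norm _ _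
        _ ≤ (L * ‖(y + t • v) - y‖) * ‖v‖ := by
            apply mul_le_mul_of_nonneg_right (hlip _ _) (norm_nonneg _)
        _ = L * t * ‖v‖ ^ 2 := by
            rw [add_sub_cancel_left, norm_smul]
            simp [abs_of_pos h0t]
            ring
    nlinarith [norm_nonneg v]
  have := hmono (Set.left_mem_Icc.2 zero_le_one) (Set.right_mem_Icc.2 zero_le_one) zero_le_one
  simp only [hφ, one_smul, one_pow, one_mul, zero_smul, add_zero, zero_pow, zero_mul,
    sub_zero, pow_two] at this
  nlinarith [this]

lemma expectation_rpow_le {Ω : Type*} [MeasureSpace Ω] [IsProbabilityMeasure (volume : Measure Ω)]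
    (h : Ω → ℝ) (hpos : ∀ ω, 0 ≤ h ω) (hm : AEStronglyMeasurable h volume)
    (r : ℝ) (hr : 1 < r) (hint : Integrable fun ω => h ω ^ r) :
    ∫ ω, h ω ≤ (∫ ω, h ω ^ r) ^ (1/r) := by
  have hr0 : (0:ℝ) < r := lt_trans zero_lt_one hr
  have hconj : Real.HolderConjugate r (Real.conjExponent r) := Real.HolderConjugate.conjExponent hr
  have hmemh : MemLp h (ENNReal.ofReal r) volume := by
    have h2 : MemLp (fun ω => ‖h ω‖ ^ (ENNReal.ofReal r).toReal) ((ENNReal.ofReal r) / (ENNReal.ofReal r)) volume := by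
      rw [ENNReal.div_self (by simp [hr0]) (by simp)]
      rw [memLp_one_iff_integrable]
      refine hint.congr ?_
      filter_upwards with ω
      rw [ENNReal.toReal_ofReal hr0.le, Real.norm_of_nonneg (hpos ω)]
    exact (memLp_norm_rpow_iff hm (by simp [hr0]) (by simp)).1 h2
  have hone : MemLp (fun _ : Ω => (1:ℝ)) (ENNReal.ofReal (Real.conjExponent r)) volume :=
    memLp_const 1
  have := integral_mul_le_Lp_mul_Lq_of_nonneg (μ := volume) hconj
    (Filter.Eventually.of_forall hpos) (Filter.Eventually.of_forall fun ω => zero_le_one)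
    hmemh hone
  simpa [Real.one_rpow, hconj.symm.pos.ne'] using this

lemma step_facts {E : Type*} [NormedAddCommGroup E] [InnerProductSpace ℝ E]
    {p lamk : ℝ} (hp : 2 < p) (hlam : 0 < lamk) (gv sv : E)
    (hsv : sv = if gv = 0 then 0 else -((lamk * ‖gv‖ ^ (p - 2)) ^ (-(1 : ℝ) / (p - 1))) • gv) :
    ‖gv‖ = lamk * ‖sv‖ ^ (p - 1) ∧ (inner ℝ gv sv : ℝ) = -(lamk * ‖sv‖ ^ p) := by
  have hp1 : (0:ℝ) < p - 1 := by linarith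
  have hp2 : (0:ℝ) < p - 2 := by linarith
  by_cases hg : gv = 0
  · subst hg
    simp only [if_pos] at hsv
    subst hsv
    constructor
    · simp [Real.zero_rpow hp1.ne']
    · simp [Real.zero_rpow (show p ≠ 0 by positivity)]
  · rw [if_neg hg] at hsv
    set r := ‖gv‖ with hr
    have hr0 : 0 < r := norm_pos_iff.2 hg
    set c := (lamk * r ^ (p - 2)) ^ (-(1 : ℝ) / (p - 1)) with hc
    have hbase : 0 < lamk * r ^ (p - 2) := mul_pos hlam (Real.rpow_pos_of_pos hr0 _)
    have hc0 : 0 < c := Real.rpow_pos_of_pos hbase _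
    have hsnorm : ‖sv‖ = c * r := by
      rw [hsv, norm_smul, norm_neg, Real.norm_of_nonneg hc0.le]
    have hcp : c ^ (p - 1) = (lamk * r ^ (p - 2))⁻¹ := by
      rw [hc, ← Real.rpow_mul hbase.le,
        show (-(1:ℝ)/(p-1))*(p-1) = -1 by field_simp, Real.rpow_neg_one]
    have hs0 : 0 < ‖sv‖ := by rw [hsnorm]; positivity
    have hkey : lamk * ‖sv‖ ^ (p - 1) = r := by
      rw [hsnorm, Real.mul_rpow hc0.le hr0.le, hcp]
      have hr2 : r ^ (p - 1) = r ^ (p - 2) * r := by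
        rw [show p - 1 = (p - 2) + 1 by ring, Real.rpow_add_one hr0.ne']
      rw [hr2]
      field_simp
    refine ⟨hkey.symm, ?_⟩
    have hinner : (inner ℝ gv sv : ℝ) = -(c * r ^ 2) := by
      rw [hsv, inner_smul_right, real_inner_self_eq_norm_sq]
      ring
    have hsp : lamk * ‖sv‖ ^ p = c * r ^ 2 := by
      rw [show p = (p - 1) + 1 by ring, Real.rpow_add_one hs0.ne', ← mul_assoc, hkey, hsnorm]
      ring
    rw [hinner, hsp]

lemma rpow_rpow_inv (x : ℝ) (hx : 0 ≤ x) {a b : ℝ} (hab : a * b = 1) : (x ^ a) ^ b = x := by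
  rw [← Real.rpow_mul hx, hab, Real.rpow_one]
set_option maxHeartbeats 1000000 in
/-- General expected gradient-norm bound for higher-order regularized PAGE with
exact refresh (variance-free error recursion, `e_0 = 0`): with `θ = 1/(1+b)`,
for all `k ≥ 1`, `(1/k) ∑_{i<k} E‖∇f(x_i)‖ ≤
(2/k) (∑_{i<k} λ_i)^{1/p} (2Δ + 4L ∑_{i<k} (4L/λ_i)^{2/(p-2)})^{(p-1)/p}`. -/
theorem hor_page_rate_general_exact
    {E : Type*} [NormedAddCommGroup E] [InnerProductSpace ℝ E] [CompleteSpace E]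
    {Ω : Type*} [MeasureSpace Ω] [IsProbabilityMeasure (volume : Measure Ω)]
    (f : E → ℝ) (f' : E → E)
    (hf : ∀ y, HasGradientAt f (f' y) y)
    (L : ℝ) (hL : 0 < L)
    (hlip : ∀ y z, ‖f' y - f' z‖ ≤ L * ‖y - z‖)
    (hbdd : BddBelow (Set.range f))
    (p : ℝ) (hp : 2 < p)
    (lam : ℕ → ℝ) (hlam : ∀ k, 0 < lam k)
    (b : ℕ) (hb : 1 ≤ b)
    (θ : ℝ) (hθ0 : 0 < θ) (hθ1 : θ ≤ 1)
    (hθ : θ = 1 / (1 + (b : ℝ)))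
    (x₀ : E) (Δ : ℝ) (hΔ : Δ = f x₀ - ⨅ y, f y)
    (x g s : ℕ → Ω → E)
    (hx0 : ∀ ω, x 0 ω = x₀)
    (hs : ∀ k ω, s k ω = if g k ω = 0 then 0
      else -((lam k * ‖g k ω‖ ^ (p - 2)) ^ (-(1 : ℝ) / (p - 1))) • g k ω)
    (hx : ∀ k ω, x (k + 1) ω = x k ω + s k ω)
    -- variance-free PAGE error recursion with `e_k := ‖g_k − ∇f(x_k)‖`
    (herr : ∀ i, (∫ ω, (‖g (i + 1) ω - f' (x (i + 1) ω)‖ ^ 2 -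
          (1 - θ) * ‖g i ω - f' (x i ω)‖ ^ 2)) ≤
        L ^ 2 * ((1 - θ) / (b : ℝ)) * ∫ ω, ‖s i ω‖ ^ 2)
    (herr0 : ∀ ω, ‖g 0 ω - f' (x 0 ω)‖ = 0)
    -- all expectations appearing are assumed finite
    (hint_f : ∀ k, Integrable fun ω => f (x k ω))
    (hint_grad : ∀ k, Integrable fun ω => ‖f' (x k ω)‖)
    (hint_err : ∀ k, Integrable fun ω => ‖g k ω - f' (x k ω)‖ ^ 2)
    (hint_s2 : ∀ k, Integrable fun ω => ‖s k ω‖ ^ 2)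
    (hint_s : ∀ k, Integrable fun ω => ‖s k ω‖ ^ p)
    (k : ℕ) (hk : 1 ≤ k) :
    (1 / (k : ℝ)) * ∑ i ∈ Finset.range k, ∫ ω, ‖f' (x i ω)‖ ≤
      2 / (k : ℝ) * (∑ i ∈ Finset.range k, lam i) ^ ((1 : ℝ) / p) *
        (2 * Δ + 4 * L * ∑ i ∈ Finset.range k, (4 * L / lam i) ^ (2 / (p - 2))) ^
          ((p - 1) / p) := by

  have hp0 : (0:ℝ) < p := by linarith
  have hp1 : (0:ℝ) < p - 1 := by linarith
  have hp2 : (0:ℝ) < p - 2 := by linarith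
  have hμ : (volume : Measure Ω) Set.univ = 1 := measure_univ
  have hfacts : ∀ i (ω : Ω), ‖g i ω‖ = lam i * ‖s i ω‖ ^ (p-1) ∧
      (inner ℝ (g i ω) (s i ω) : ℝ) = -(lam i * ‖s i ω‖ ^ p) :=
    fun i ω => step_facts hp (hlam i) _ _ (hs i ω)
  obtain ⟨F, hF⟩ : ∃ F : ℕ → ℝ, ∀ i, F i = ∫ ω, f (x i ω) := ⟨_, fun _ => rfl⟩
  obtain ⟨A, hA⟩ : ∃ A : ℕ → ℝ, ∀ i, A i = ∫ ω, ‖s i ω‖ ^ p := ⟨_, fun _ => rfl⟩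
  obtain ⟨V, hV⟩ : ∃ V : ℕ → ℝ, ∀ i, V i = ∫ ω, ‖s i ω‖ ^ 2 := ⟨_, fun _ => rfl⟩
  obtain ⟨u, hu'⟩ : ∃ u : ℕ → ℝ, ∀ i, u i = ∫ ω, ‖g i ω - f' (x i ω)‖ ^ 2 := ⟨_, fun _ => rfl⟩
  have hA0 : ∀ i, 0 ≤ A i := fun i => by
    rw [hA]; exact integral_nonneg fun ω => Real.rpow_nonneg (norm_nonneg _) _
  have hV0 : ∀ i, 0 ≤ V i := fun i => by
    rw [hV]; exact integral_nonneg fun ω => by positivity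
  have hu0 : ∀ i, 0 ≤ u i := fun i => by
    rw [hu']; exact integral_nonneg fun ω => by positivity
  -- measurability
  have hmes_e : ∀ i, AEStronglyMeasurable (fun ω => ‖g i ω - f' (x i ω)‖) volume := by
    intro i
    have h2 := (hint_err i).aestronglyMeasurable
    have heq : (fun ω => ‖g i ω - f' (x i ω)‖)
        = fun ω => Real.sqrt (‖g i ω - f' (x i ω)‖ ^ 2) := by
      funext ω; rw [Real.sqrt_sq (norm_nonneg _)]
    rw [heq]
    exact Real.continuous_sqrt.comp_aestronglyMeasurable h2
  have hmes_s : ∀ i, AEStronglyMeasurable (fun ω => ‖s i ω‖) volume := by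
    intro i
    have h2 := (hint_s2 i).aestronglyMeasurable
    have heq : (fun ω => ‖s i ω‖) = fun ω => Real.sqrt (‖s i ω‖ ^ 2) := by
      funext ω; rw [Real.sqrt_sq (norm_nonneg _)]
    rw [heq]
    exact Real.continuous_sqrt.comp_aestronglyMeasurable h2
  have hrpow_cont : ∀ q : ℝ, 0 ≤ q → Continuous fun t : ℝ => t ^ q := fun q hq =>
    continuous_iff_continuousAt.2 fun t => Real.continuousAt_rpow_const t q (Or.inr hq)
  have hint_e : ∀ i, Integrable (fun ω => ‖g i ω - f' (x i ω)‖) := by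
    intro i
    refine Integrable.mono ((integrable_const (1:ℝ)).add (hint_err i)) (hmes_e i) ?_
    filter_upwards with ω
    simp only [Pi.add_apply]
    rw [Real.norm_of_nonneg (norm_nonneg _), Real.norm_of_nonneg (by positivity)]
    nlinarith [norm_nonneg (g i ω - f' (x i ω)), sq_nonneg (‖g i ω - f' (x i ω)‖ - 1)]
  have hint_sp1 : ∀ i, Integrable (fun ω => ‖s i ω‖ ^ (p-1)) := by
    intro i
    refine Integrable.mono ((integrable_const (1:ℝ)).add (hint_s i))
      ((hrpow_cont (p-1) hp1.le).comp_aestronglyMeasurable (hmes_s i)) ?_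
    filter_upwards with ω
    simp only [Pi.add_apply]
    rw [Real.norm_of_nonneg (Real.rpow_nonneg (norm_nonneg _) _),
      Real.norm_of_nonneg (by positivity)]
    rcases le_or_gt ‖s i ω‖ 1 with h1 | h1
    · have h2 := Real.rpow_le_one (norm_nonneg _) h1 hp1.le
      have h3 : (0:ℝ) ≤ ‖s i ω‖ ^ p := Real.rpow_nonneg (norm_nonneg _) _
      linarith
    · have h2 := Real.rpow_le_rpow_of_exponent_le h1.le (by linarith : p - 1 ≤ p)
      linarith
  -- pathwise descent inequality
  have hpath : ∀ i (ω : Ω), f (x (i+1) ω) ≤ f (x i ω) - lam i * ‖s i ω‖ ^ p +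
      (‖g i ω - f' (x i ω)‖ ^ 2 / (2*L) + L * ‖s i ω‖ ^ 2) := by
    intro i ω
    have hd := descent_lemma f f' hf L hL.le hlip (x i ω) (s i ω)
    rw [← hx i ω] at hd
    have hgs := (hfacts i ω).2
    have hsplit : (inner ℝ (f' (x i ω)) (s i ω) : ℝ)
        = (inner ℝ (g i ω) (s i ω) : ℝ) + (inner ℝ (f' (x i ω) - g i ω) (s i ω) : ℝ) := by
      rw [inner_sub_left]; ring
    have hcs : (inner ℝ (f' (x i ω) - g i ω) (s i ω) : ℝ) ≤ ‖g i ω - f' (x i ω)‖ * ‖s i ω‖ := by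
      calc (inner ℝ (f' (x i ω) - g i ω) (s i ω) : ℝ) ≤ ‖f' (x i ω) - g i ω‖ * ‖s i ω‖ :=
            real_inner_le_norm _ _
        _ = ‖g i ω - f' (x i ω)‖ * ‖s i ω‖ := by rw [norm_sub_rev]
    have hy : ‖g i ω - f' (x i ω)‖ * ‖s i ω‖ ≤
        ‖g i ω - f' (x i ω)‖ ^ 2 / (2*L) + L/2 * ‖s i ω‖ ^ 2 := by
      rw [← sub_nonneg]
      have heq : ‖g i ω - f' (x i ω)‖ ^ 2 / (2*L) + L/2 * ‖s i ω‖ ^ 2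
          - ‖g i ω - f' (x i ω)‖ * ‖s i ω‖
          = (‖g i ω - f' (x i ω)‖ - L * ‖s i ω‖) ^ 2 / (2*L) := by
        field_simp; ring
      rw [heq]; positivity
    rw [hsplit, hgs] at hd
    linarith
  -- expected one-step inequality
  have hstep : ∀ i, F (i+1) ≤ F i - lam i * A i + (u i / (2*L) + L * V i) := by
    intro i
    have hR1 : Integrable (fun ω => f (x i ω) - lam i * ‖s i ω‖ ^ p) volume :=
      (hint_f i).sub ((hint_s i).const_mul (lam i))
    have hR2 : Integrable (fun ω => ‖g i ω - f' (x i ω)‖ ^ 2 / (2*L) + L * ‖s i ω‖ ^ 2) volume :=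
      ((hint_err i).div_const (2*L)).add ((hint_s2 i).const_mul L)
    have hR3 : Integrable (fun ω => lam i * ‖s i ω‖ ^ p) volume := (hint_s i).const_mul (lam i)
    have hR4 : Integrable (fun ω => ‖g i ω - f' (x i ω)‖ ^ 2 / (2*L)) volume :=
      (hint_err i).div_const (2*L)
    have hR5 : Integrable (fun ω => L * ‖s i ω‖ ^ 2) volume := (hint_s2 i).const_mul L
    have hle : (∫ ω, f (x (i+1) ω)) ≤ ∫ ω, (f (x i ω) - lam i * ‖s i ω‖ ^ p +
        (‖g i ω - f' (x i ω)‖ ^ 2 / (2*L) + L * ‖s i ω‖ ^ 2)) :=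
      integral_mono (hint_f (i+1)) (hR1.add hR2) (fun ω => hpath i ω)
    rw [integral_add hR1 hR2, integral_sub (hint_f i) hR3, integral_add hR4 hR5,
      integral_const_mul, integral_const_mul, integral_div] at hle
    rw [hF, hF, hA, hV, hu']
    exact hle
  -- error recursion
  have hb0 : (0:ℝ) < b := by exact_mod_cast hb
  have hθb : (1 - θ)/(b:ℝ) = θ := by
    have h1b : (0:ℝ) < 1 + b := by linarith
    rw [hθ]; field_simp; ring
  have hrec : ∀ i, u (i+1) ≤ (1-θ) * u i + L^2 * θ * V i := by
    intro i
    have h1 := herr i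
    have hR6 : Integrable (fun ω => (1-θ) * ‖g i ω - f' (x i ω)‖ ^ 2) volume :=
      (hint_err i).const_mul (1-θ)
    rw [integral_sub (hint_err (i+1)) hR6, integral_const_mul, hθb] at h1
    rw [hu', hu', hV]
    linarith [h1]
  have hu00 : u 0 = 0 := by
    rw [hu']
    have heq : (fun ω => ‖g 0 ω - f' (x 0 ω)‖ ^ 2) = fun _ : Ω => (0:ℝ) := by
      funext ω; rw [herr0 ω]; norm_num
    rw [heq, integral_zero]
  -- Lyapunov step
  have hc0 : (0:ℝ) < 1/(2*L*θ) := by positivity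
  have hΦstep : ∀ i, F (i+1) + 1/(2*L*θ) * u (i+1) ≤
      F i + 1/(2*L*θ) * u i - lam i/2 * A i + 3*L/2 * ((3*L/lam i) ^ (2/(p-2))) := by
    intro i
    have hlami : 0 < lam i := hlam i
    have h1 : 1/(2*L*θ) * u (i+1) ≤ 1/(2*L*θ) * ((1-θ)*u i + L^2*θ*V i) :=
      mul_le_mul_of_nonneg_left (hrec i) hc0.le
    have h2 : 1/(2*L*θ) * ((1-θ)*u i + L^2*θ*V i)
        = 1/(2*L*θ) * u i - u i/(2*L) + L/2 * V i := by
      field_simp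
    have h3 : 3*L/2 * V i ≤ lam i/2 * A i + 3*L/2 * ((3*L/lam i) ^ (2/(p-2))) := by
      have hpw : ∀ ω : Ω, 3*L/2 * ‖s i ω‖ ^ 2 ≤
          lam i/2 * ‖s i ω‖ ^ p + 3*L/2 * ((3*L/lam i) ^ (2/(p-2))) := by
        intro ω
        set t := ‖s i ω‖ with ht
        have ht0 : (0:ℝ) ≤ t := norm_nonneg _
        have hC0 : (0:ℝ) ≤ 3*L/2 * ((3*L/lam i) ^ (2/(p-2))) := by positivity
        rcases le_or_gt (3*L/lam i) (t ^ (p-2)) with hcase | hcase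
        · have htpos : 0 < t := by
            rcases ht0.lt_or_eq with h | h
            · exact h
            · exfalso
              rw [← h, Real.zero_rpow hp2.ne'] at hcase
              have h5 : 0 < 3*L/lam i := by positivity
              linarith
          have h1' : 3*L ≤ t ^ (p-2) * lam i := by
            rw [div_le_iff₀ (hlam i)] at hcase; linarith
          have h2' : t ^ p = t ^ (p-2) * t ^ 2 := by
            rw [← Real.rpow_natCast t 2, ← Real.rpow_add htpos]
            norm_num
          have h6 : 3*L/2 * t^2 ≤ lam i/2 * t ^ p := by
            rw [h2']
            have h7 := mul_le_mul_of_nonneg_right h1' (sq_nonneg t)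
            nlinarith [h7]
          linarith
        · have h1' : t ^ 2 ≤ (3*L/lam i) ^ (2/(p-2)) := by
            have e1 : (t ^ (p-2)) ^ (2/(p-2)) = t ^ (2:ℕ) := by
              rw [← Real.rpow_mul ht0, show (p-2)*(2/(p-2)) = 2 by field_simp,
                ← Real.rpow_natCast t 2]
              norm_num
            rw [← e1]
            exact Real.rpow_le_rpow (Real.rpow_nonneg ht0 _) hcase.le (by positivity)
          have h5 : (0:ℝ) ≤ lam i/2 * t ^ p :=
            mul_nonneg (by linarith) (Real.rpow_nonneg ht0 p)
          have h8 : 3*L/2 * t^2 ≤ 3*L/2 * ((3*L/lam i) ^ (2/(p-2))) :=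
            mul_le_mul_of_nonneg_left h1' (by linarith)
          linarith
      have hQ0 : Integrable (fun ω => 3*L/2 * ‖s i ω‖ ^ 2) volume := (hint_s2 i).const_mul _
      have hQ1 : Integrable (fun ω => lam i/2 * ‖s i ω‖ ^ p) volume := (hint_s i).const_mul _
      have hQ2 : Integrable (fun _ : Ω => 3*L/2 * ((3*L/lam i) ^ (2/(p-2)))) volume :=
        integrable_const _
      have hle : (∫ ω, 3*L/2 * ‖s i ω‖ ^ 2) ≤ ∫ ω, (lam i/2 * ‖s i ω‖ ^ p +
          3*L/2 * ((3*L/lam i) ^ (2/(p-2)))) :=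
        integral_mono hQ0 (hQ1.add hQ2) hpw
      rw [integral_add hQ1 hQ2, integral_const_mul, integral_const_mul, integral_const] at hle
      rw [hV, hA]
      simpa [hμ] using hle
    linarith [hstep i, h1, h2, h3]
  -- telescoping
  have htel : ∀ n, F n + 1/(2*L*θ) * u n +
      ∑ i ∈ Finset.range n, (lam i/2 * A i - 3*L/2 * ((3*L/lam i) ^ (2/(p-2)))) ≤
      F 0 + 1/(2*L*θ) * u 0 := by
    intro n
    induction n with
    | zero => simp
    | succ n ih =>
      rw [Finset.sum_range_succ]
      linarith [hΦstep n]
  have hF0 : F 0 = f x₀ := by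
    rw [hF]
    have heq : (fun ω => f (x 0 ω)) = fun _ : Ω => f x₀ := by funext ω; rw [hx0]
    rw [heq, integral_const]
    simp [hμ]
  have hm : ∀ z : E, (⨅ y, f y) ≤ f z := fun z => ciInf_le hbdd z
  have hFk : (⨅ y, f y) ≤ F k := by
    rw [hF]
    have h1 : ∫ (_ : Ω), (⨅ y, f y) ≤ ∫ ω, f (x k ω) :=
      integral_mono (integrable_const _) (hint_f k) (fun ω => hm _)
    simpa [hμ] using h1
  have hΔ0 : 0 ≤ Δ := by rw [hΔ]; linarith [hm x₀]
  -- sum bound on lam i * A i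
  have hsum_a : ∑ i ∈ Finset.range k, lam i * A i ≤
      2*Δ + 4*L * ∑ i ∈ Finset.range k, (4*L/lam i) ^ (2/(p-2)) := by
    have h1 := htel k
    rw [hu00, hF0, mul_zero, add_zero, Finset.sum_sub_distrib] at h1
    have h2 : 0 ≤ 1/(2*L*θ) * u k := mul_nonneg hc0.le (hu0 k)
    have h3 : ∑ i ∈ Finset.range k, lam i/2 * A i
        = (∑ i ∈ Finset.range k, lam i * A i)/2 := by
      rw [Finset.sum_div]
      exact Finset.sum_congr rfl fun i _ => by ring
    have h4 : ∑ i ∈ Finset.range k, 3*L/2 * ((3*L/lam i) ^ (2/(p-2)))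
        ≤ ∑ i ∈ Finset.range k, 2*L * ((4*L/lam i) ^ (2/(p-2))) := by
      apply Finset.sum_le_sum
      intro i _
      have hlami : 0 < lam i := hlam i
      have hb2 : (3*L/lam i) ^ (2/(p-2)) ≤ (4*L/lam i) ^ (2/(p-2)) :=
        Real.rpow_le_rpow (by positivity) ((div_le_div_iff_of_pos_right hlami).2 (by linarith))
          (by positivity)
      have hb3 : (0:ℝ) ≤ (3*L/lam i) ^ (2/(p-2)) := by positivity
      have hb4 : 3*L/2 * ((3*L/lam i) ^ (2/(p-2))) ≤ 3*L/2 * ((4*L/lam i) ^ (2/(p-2))) :=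
        mul_le_mul_of_nonneg_left hb2 (by linarith)
      have hb5 : (0:ℝ) ≤ L * ((4*L/lam i) ^ (2/(p-2))) :=
        mul_nonneg hL.le (le_trans hb3 hb2)
      linarith
    have h5 : ∑ i ∈ Finset.range k, 2*L * ((4*L/lam i) ^ (2/(p-2)))
        = 2*L * ∑ i ∈ Finset.range k, (4*L/lam i) ^ (2/(p-2)) := by rw [Finset.mul_sum]
    rw [h3] at h1
    rw [hΔ]
    linarith [h1, h2, h4, hFk]
    -- conjugate exponents
  have hconj1 : Real.HolderConjugate p (p/(p-1)) := by
    rw [Real.holderConjugate_iff]; constructor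
    · linarith
    · rw [inv_div]; field_simp; ring
  have hconj2 : Real.HolderConjugate (p/2) (p/(p-2)) := by
    rw [Real.holderConjugate_iff]; constructor
    · rw [lt_div_iff₀ (by norm_num : (0:ℝ) < 2)]; linarith
    · rw [inv_div, inv_div]; field_simp; ring
  have hconj3 : Real.HolderConjugate 2 2 := Real.holderConjugate_iff.mpr ⟨one_lt_two, by norm_num⟩
  -- per-index Hölder bounds
  have hAi_hold : ∀ i, (∫ ω, ‖s i ω‖ ^ (p-1)) ≤ (A i) ^ ((p-1)/p) := by
    intro i
    have hr1 : (1:ℝ) < p/(p-1) := by rw [lt_div_iff₀ hp1]; linarith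
    have hee : (fun ω => (‖s i ω‖ ^ (p-1)) ^ (p/(p-1))) = fun ω => ‖s i ω‖ ^ p := by
      funext ω
      rw [← Real.rpow_mul (norm_nonneg _), show (p-1)*(p/(p-1)) = p by field_simp]
    have happ : (∫ ω, ‖s i ω‖ ^ (p-1)) ≤
        (∫ ω, (‖s i ω‖ ^ (p-1)) ^ (p/(p-1))) ^ (1/(p/(p-1))) :=
      expectation_rpow_le (fun ω => ‖s i ω‖ ^ (p-1))
        (fun ω => Real.rpow_nonneg (norm_nonneg _) _)
        ((hrpow_cont (p-1) hp1.le).comp_aestronglyMeasurable (hmes_s i))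
        (p/(p-1)) hr1 (by rw [hee]; exact hint_s i)
    have h2 : (∫ ω, (‖s i ω‖ ^ (p-1)) ^ (p/(p-1))) = A i := by rw [hee, hA]
    rw [h2, one_div_div] at happ
    exact happ
  have hVA : ∀ i, V i ≤ (A i) ^ ((2:ℝ)/p) := by
    intro i
    have hr1 : (1:ℝ) < p/2 := by rw [lt_div_iff₀ (by norm_num : (0:ℝ) < 2)]; linarith
    have hee : (fun ω => (‖s i ω‖ ^ 2) ^ (p/2)) = fun ω => ‖s i ω‖ ^ p := by
      funext ω
      rw [← Real.rpow_natCast (‖s i ω‖) 2, ← Real.rpow_mul (norm_nonneg _),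
        show ((2:ℕ):ℝ)*(p/2) = p by push_cast; ring]
    have happ : (∫ ω, ‖s i ω‖ ^ 2) ≤ (∫ ω, (‖s i ω‖ ^ 2) ^ (p/2)) ^ (1/(p/2)) :=
      expectation_rpow_le (fun ω => ‖s i ω‖ ^ 2) (fun ω => sq_nonneg _)
        (hint_s2 i).aestronglyMeasurable (p/2) hr1 (by rw [hee]; exact hint_s i)
    have h2 : (∫ ω, (‖s i ω‖ ^ 2) ^ (p/2)) = A i := by rw [hee, hA]
    rw [h2, one_div_div] at happ
    rw [hV]
    exact happ
  have hCSi : ∀ i, (∫ ω, ‖g i ω - f' (x i ω)‖) ≤ (u i) ^ ((1:ℝ)/2) := by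
    intro i
    have hee : (fun ω => ‖g i ω - f' (x i ω)‖ ^ (2:ℝ)) = fun ω => ‖g i ω - f' (x i ω)‖ ^ 2 := by
      funext ω
      rw [show (2:ℝ) = ((2:ℕ):ℝ) by norm_num, Real.rpow_natCast]
    have happ : (∫ ω, ‖g i ω - f' (x i ω)‖) ≤
        (∫ ω, ‖g i ω - f' (x i ω)‖ ^ (2:ℝ)) ^ (1/(2:ℝ)) :=
      expectation_rpow_le (fun ω => ‖g i ω - f' (x i ω)‖)
        (fun ω => norm_nonneg _) (hmes_e i) 2 one_lt_two (by rw [hee]; exact hint_err i)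
    have h2 : (∫ ω, ‖g i ω - f' (x i ω)‖ ^ (2:ℝ)) = u i := by rw [hee, hu']
    rw [h2] at happ
    exact happ
  have hgrad_i : ∀ i, (∫ ω, ‖f' (x i ω)‖) ≤ lam i * (A i) ^ ((p-1)/p) + (u i) ^ ((1:ℝ)/2) := by
    intro i
    have hpw : ∀ ω : Ω, ‖f' (x i ω)‖ ≤ lam i * ‖s i ω‖ ^ (p-1) + ‖g i ω - f' (x i ω)‖ := by
      intro ω
      have h1 : ‖f' (x i ω)‖ = ‖g i ω - (g i ω - f' (x i ω))‖ := by congr 1; abel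
      rw [h1, ← (hfacts i ω).1]
      exact norm_sub_le _ _
    have hR1 : Integrable (fun ω => lam i * ‖s i ω‖ ^ (p-1)) volume := (hint_sp1 i).const_mul _
    have hle : (∫ ω, ‖f' (x i ω)‖) ≤
        ∫ ω, (lam i * ‖s i ω‖ ^ (p-1) + ‖g i ω - f' (x i ω)‖) :=
      integral_mono (hint_grad i) (hR1.add (hint_e i)) hpw
    rw [integral_add hR1 (hint_e i), integral_const_mul] at hle
    have h4 := mul_le_mul_of_nonneg_left (hAi_hold i) (hlam i).le
    linarith [hCSi i, hle, h4]
  -- abbreviations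
  set T := ∑ i ∈ Finset.range k, lam i with hT
  set S := ∑ i ∈ Finset.range k, (lam i) ^ (-(2/(p-2)) : ℝ) with hS
  set B := 2*Δ + 4*L * ∑ i ∈ Finset.range k, (4*L/lam i) ^ (2/(p-2)) with hB
  have hknz : (0:ℝ) < k := by
    have : 0 < k := hk
    exact_mod_cast this
  have hmem0 : (0:ℕ) ∈ Finset.range k := Finset.mem_range.2 hk
  have hT0 : 0 < T := Finset.sum_pos (fun i _ => hlam i) ⟨0, hmem0⟩
  have hS0 : 0 < S := Finset.sum_pos (fun i _ => Real.rpow_pos_of_pos (hlam i) _) ⟨0, hmem0⟩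
  have h4L : (0:ℝ) < 4*L := by linarith
  have hsumC4 : 0 < ∑ i ∈ Finset.range k, (4*L/lam i) ^ (2/(p-2)) :=
    Finset.sum_pos (fun i _ => Real.rpow_pos_of_pos (div_pos h4L (hlam i)) _) ⟨0, hmem0⟩
  have hB0 : 0 < B := by
    rw [hB]
    nlinarith [hsumC4, hΔ0, h4L, mul_pos h4L hsumC4]
  have hBS : (4*L) ^ (p/(p-2)) * S ≤ B := by
    have he : ∀ i ∈ Finset.range k, (4*L) ^ (p/(p-2)) * (lam i) ^ (-(2/(p-2)) : ℝ)
        = 4*L * ((4*L/lam i) ^ (2/(p-2))) := by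
      intro i _
      rw [show p/(p-2) = 2/(p-2) + 1 by field_simp; ring, Real.rpow_add h4L, Real.rpow_one,
        Real.div_rpow h4L.le (hlam i).le, Real.rpow_neg (hlam i).le]
      ring
    have hcalc : (4*L) ^ (p/(p-2)) * S
        = 4*L * ∑ i ∈ Finset.range k, (4*L/lam i) ^ (2/(p-2)) := by
      rw [hS, Finset.mul_sum]
      rw [Finset.sum_congr rfl he, ← Finset.mul_sum]
    rw [hcalc, hB]
    linarith
  have hSp : S ^ ((p-2)/p) ≤ B ^ ((p-2)/p) / (4*L) := by
    have hXpos : (0:ℝ) < (4*L) ^ (p/(p-2)) := Real.rpow_pos_of_pos h4L _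
    have h1 : S ≤ B / ((4*L) ^ (p/(p-2))) := by
      rw [le_div_iff₀ hXpos]
      linarith [hBS]
    have h2 := Real.rpow_le_rpow hS0.le h1 (by positivity : (0:ℝ) ≤ (p-2)/p)
    rw [Real.div_rpow hB0.le hXpos.le, rpow_rpow_inv _ h4L.le (by field_simp)] at h2
    exact h2
  have hlamA0 : ∀ i, (0:ℝ) ≤ lam i * A i := fun i => mul_nonneg (hlam i).le (hA0 i)
  have hsumlamA0 : (0:ℝ) ≤ ∑ i ∈ Finset.range k, lam i * A i :=
    Finset.sum_nonneg fun i _ => hlamA0 i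
  -- Hölder bound 1
  have hH1 : ∑ i ∈ Finset.range k, lam i * (A i) ^ ((p-1)/p)
      ≤ T ^ ((1:ℝ)/p) * B ^ ((p-1)/p) := by
    have h0 : ∑ i ∈ Finset.range k, (lam i) ^ ((1:ℝ)/p) * (lam i * A i) ^ ((p-1)/p)
        ≤ (∑ i ∈ Finset.range k, |(lam i) ^ ((1:ℝ)/p)| ^ p) ^ (1/p) *
          (∑ i ∈ Finset.range k, |(lam i * A i) ^ ((p-1)/p)| ^ (p/(p-1))) ^ (1/(p/(p-1))) :=
      Real.inner_le_Lp_mul_Lq (Finset.range k) _ _ hconj1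
    have e1 : ∀ i ∈ Finset.range k, (lam i) ^ ((1:ℝ)/p) * (lam i * A i) ^ ((p-1)/p)
        = lam i * (A i) ^ ((p-1)/p) := fun i _ => by
      rw [Real.mul_rpow (hlam i).le (hA0 i), ← mul_assoc, ← Real.rpow_add (hlam i),
        show (1:ℝ)/p + (p-1)/p = 1 by field_simp; ring, Real.rpow_one]
    have e2 : ∀ i ∈ Finset.range k, |(lam i) ^ ((1:ℝ)/p)| ^ p = lam i := fun i _ => by
      rw [abs_of_nonneg (Real.rpow_nonneg (hlam i).le _),
        rpow_rpow_inv _ (hlam i).le (by field_simp)]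
    have e3 : ∀ i ∈ Finset.range k, |(lam i * A i) ^ ((p-1)/p)| ^ (p/(p-1)) = lam i * A i :=
      fun i _ => by
      rw [abs_of_nonneg (Real.rpow_nonneg (hlamA0 i) _),
        rpow_rpow_inv _ (hlamA0 i) (by field_simp)]
    rw [Finset.sum_congr rfl e1, Finset.sum_congr rfl e2, Finset.sum_congr rfl e3,
      one_div_div] at h0
    have h5 : (∑ i ∈ Finset.range k, lam i * A i) ^ ((p-1)/p) ≤ B ^ ((p-1)/p) :=
      Real.rpow_le_rpow hsumlamA0 hsum_a (by positivity)
    calc ∑ i ∈ Finset.range k, lam i * (A i) ^ ((p-1)/p)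
        ≤ T ^ (1/p) * (∑ i ∈ Finset.range k, lam i * A i) ^ ((p-1)/p) := h0
      _ ≤ T ^ ((1:ℝ)/p) * B ^ ((p-1)/p) :=
          mul_le_mul_of_nonneg_left h5 (Real.rpow_nonneg hT0.le _)
  -- Hölder bound for k
  have hk_le : (k:ℝ) ≤ T ^ ((2:ℝ)/p) * S ^ ((p-2)/p) := by
    have h0 : ∑ i ∈ Finset.range k, (lam i) ^ ((2:ℝ)/p) * (lam i) ^ (-(2/p) : ℝ)
        ≤ (∑ i ∈ Finset.range k, |(lam i) ^ ((2:ℝ)/p)| ^ (p/2)) ^ (1/(p/2)) *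
          (∑ i ∈ Finset.range k, |(lam i) ^ (-(2/p) : ℝ)| ^ (p/(p-2))) ^ (1/(p/(p-2))) :=
      Real.inner_le_Lp_mul_Lq (Finset.range k) _ _ hconj2
    have e1 : ∀ i ∈ Finset.range k, (lam i) ^ ((2:ℝ)/p) * (lam i) ^ (-(2/p) : ℝ) = (1:ℝ) :=
      fun i _ => by
      rw [← Real.rpow_add (hlam i), show (2:ℝ)/p + -(2/p) = 0 by ring, Real.rpow_zero]
    have e2 : ∀ i ∈ Finset.range k, |(lam i) ^ ((2:ℝ)/p)| ^ (p/2) = lam i := fun i _ => by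
      rw [abs_of_nonneg (Real.rpow_nonneg (hlam i).le _),
        rpow_rpow_inv _ (hlam i).le (by field_simp)]
    have e3 : ∀ i ∈ Finset.range k, |(lam i) ^ (-(2/p) : ℝ)| ^ (p/(p-2))
        = (lam i) ^ (-(2/(p-2)) : ℝ) := fun i _ => by
      rw [abs_of_nonneg (Real.rpow_nonneg (hlam i).le _), ← Real.rpow_mul (hlam i).le,
        show -(2/p) * (p/(p-2)) = -(2/(p-2)) by field_simp]
    rw [Finset.sum_congr rfl e1, Finset.sum_congr rfl e2, Finset.sum_congr rfl e3,
      one_div_div, one_div_div, Finset.sum_const, Finset.card_range, nsmul_eq_mul, mul_one] at h0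
    exact h0
  -- bound on sum of second moments
  have hSV : ∑ i ∈ Finset.range k, V i ≤ B / (4*L) := by
    have hstep1 : ∑ i ∈ Finset.range k, V i
        ≤ ∑ i ∈ Finset.range k, (lam i * A i) ^ ((2:ℝ)/p) * (lam i) ^ (-(2/p) : ℝ) := by
      apply Finset.sum_le_sum
      intro i _
      have e : (lam i * A i) ^ ((2:ℝ)/p) * (lam i) ^ (-(2/p) : ℝ) = (A i) ^ ((2:ℝ)/p) := by
        rw [Real.mul_rpow (hlam i).le (hA0 i), Real.rpow_neg (hlam i).le]
        have hne : (lam i) ^ ((2:ℝ)/p) ≠ 0 := (Real.rpow_pos_of_pos (hlam i) _).ne'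
        field_simp
      rw [e]
      exact hVA i
    have h0 : ∑ i ∈ Finset.range k, (lam i * A i) ^ ((2:ℝ)/p) * (lam i) ^ (-(2/p) : ℝ)
        ≤ (∑ i ∈ Finset.range k, |(lam i * A i) ^ ((2:ℝ)/p)| ^ (p/2)) ^ (1/(p/2)) *
          (∑ i ∈ Finset.range k, |(lam i) ^ (-(2/p) : ℝ)| ^ (p/(p-2))) ^ (1/(p/(p-2))) :=
      Real.inner_le_Lp_mul_Lq (Finset.range k) _ _ hconj2
    have e2 : ∀ i ∈ Finset.range k, |(lam i * A i) ^ ((2:ℝ)/p)| ^ (p/2) = lam i * A i :=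
      fun i _ => by
      rw [abs_of_nonneg (Real.rpow_nonneg (hlamA0 i) _),
        rpow_rpow_inv _ (hlamA0 i) (by field_simp)]
    have e3 : ∀ i ∈ Finset.range k, |(lam i) ^ (-(2/p) : ℝ)| ^ (p/(p-2))
        = (lam i) ^ (-(2/(p-2)) : ℝ) := fun i _ => by
      rw [abs_of_nonneg (Real.rpow_nonneg (hlam i).le _), ← Real.rpow_mul (hlam i).le,
        show -(2/p) * (p/(p-2)) = -(2/(p-2)) by field_simp]
    rw [Finset.sum_congr rfl e2, Finset.sum_congr rfl e3, one_div_div, one_div_div] at h0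
    have h5 : (∑ i ∈ Finset.range k, lam i * A i) ^ ((2:ℝ)/p) ≤ B ^ ((2:ℝ)/p) :=
      Real.rpow_le_rpow hsumlamA0 hsum_a (by positivity)
    calc ∑ i ∈ Finset.range k, V i
        ≤ ∑ i ∈ Finset.range k, (lam i * A i) ^ ((2:ℝ)/p) * (lam i) ^ (-(2/p) : ℝ) := hstep1
      _ ≤ (∑ i ∈ Finset.range k, lam i * A i) ^ ((2:ℝ)/p) * S ^ ((p-2)/p) := h0
      _ ≤ B ^ ((2:ℝ)/p) * (B ^ ((p-2)/p) / (4*L)) :=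
          mul_le_mul h5 hSp (Real.rpow_nonneg hS0.le _) (Real.rpow_nonneg hB0.le _)
      _ = B / (4*L) := by
          rw [mul_div_assoc', ← Real.rpow_add hB0,
            show (2:ℝ)/p + (p-2)/p = 1 by field_simp; ring, Real.rpow_one]
  -- sum of squared errors
  have hsumu : ∑ i ∈ Finset.range k, u i ≤ L^2 * ∑ i ∈ Finset.range k, V i := by
    have h1 : ∑ i ∈ Finset.range k, u (i+1)
        ≤ ∑ i ∈ Finset.range k, ((1-θ)*u i + L^2*θ*V i) := Finset.sum_le_sum fun i _ => hrec i
    rw [Finset.sum_add_distrib, ← Finset.mul_sum, ← Finset.mul_sum] at h1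
    have h2 : ∑ i ∈ Finset.range k, u (i+1) = ∑ i ∈ Finset.range k, u i + u k - u 0 := by
      have h3 := Finset.sum_range_succ' u k
      have h4 := Finset.sum_range_succ u k
      linarith
    rw [h2, hu00] at h1
    have h5 : θ * (∑ i ∈ Finset.range k, u i) ≤ θ * (L^2 * ∑ i ∈ Finset.range k, V i) := by
      nlinarith [h1, hu0 k]
    exact le_of_mul_le_mul_left h5 hθ0
  -- sum of error norms
  have herr_sum : ∑ i ∈ Finset.range k, (u i) ^ ((1:ℝ)/2)
      ≤ T ^ ((1:ℝ)/p) * B ^ ((p-1)/p) := by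
    have h0 : ∑ i ∈ Finset.range k, (1:ℝ) * (u i) ^ ((1:ℝ)/2)
        ≤ (∑ i ∈ Finset.range k, |(1:ℝ)| ^ (2:ℝ)) ^ (1/(2:ℝ)) *
          (∑ i ∈ Finset.range k, |(u i) ^ ((1:ℝ)/2)| ^ (2:ℝ)) ^ (1/(2:ℝ)) :=
      Real.inner_le_Lp_mul_Lq (Finset.range k) _ _ hconj3
    have e1 : ∀ i ∈ Finset.range k, (1:ℝ) * (u i) ^ ((1:ℝ)/2) = (u i) ^ ((1:ℝ)/2) :=
      fun i _ => one_mul _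
    have e2 : ∀ i ∈ Finset.range k, |(1:ℝ)| ^ (2:ℝ) = (1:ℝ) := fun i _ => by
      rw [abs_one, Real.one_rpow]
    have e3 : ∀ i ∈ Finset.range k, |(u i) ^ ((1:ℝ)/2)| ^ (2:ℝ) = u i := fun i _ => by
      rw [abs_of_nonneg (Real.rpow_nonneg (hu0 i) _), rpow_rpow_inv _ (hu0 i) (by norm_num)]
    rw [Finset.sum_congr rfl e1, Finset.sum_congr rfl e2, Finset.sum_congr rfl e3,
      Finset.sum_const, Finset.card_range, nsmul_eq_mul, mul_one] at h0
    have hsum_u_le : ∑ i ∈ Finset.range k, u i ≤ L*B/4 := by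
      have h2 := mul_le_mul_of_nonneg_left hSV (by positivity : (0:ℝ) ≤ L^2)
      have h3 : L^2 * (B/(4*L)) = L*B/4 := by field_simp
      linarith [hsumu]
    have hLB0 : (0:ℝ) ≤ L*B/4 := by positivity
    have h6 : (∑ i ∈ Finset.range k, u i) ^ ((1:ℝ)/2) ≤ (L*B/4) ^ ((1:ℝ)/2) :=
      Real.rpow_le_rpow (Finset.sum_nonneg fun i _ => hu0 i) hsum_u_le (by norm_num)
    have h7 : ∑ i ∈ Finset.range k, (u i) ^ ((1:ℝ)/2)
        ≤ (k:ℝ) ^ ((1:ℝ)/2) * (L*B/4) ^ ((1:ℝ)/2) := by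
      refine le_trans (le_of_eq ?_) (le_trans h0
        (mul_le_mul_of_nonneg_left h6 (Real.rpow_nonneg hknz.le _)))
      rfl
    have h8 : (k:ℝ) ^ ((1:ℝ)/2) * (L*B/4) ^ ((1:ℝ)/2) = ((k:ℝ)*(L*B/4)) ^ ((1:ℝ)/2) :=
      (Real.mul_rpow hknz.le hLB0).symm
    have hY0 : (0:ℝ) ≤ T ^ ((1:ℝ)/p) * B ^ ((p-1)/p) :=
      mul_nonneg (Real.rpow_nonneg hT0.le _) (Real.rpow_nonneg hB0.le _)
    have hkey : (k:ℝ)*(L*B/4) ≤ T ^ ((2:ℝ)/p) * (B ^ ((p-2)/p) * B) := by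
      have t1 : (k:ℝ) * (L*B/4) ≤ (T ^ ((2:ℝ)/p) * S ^ ((p-2)/p)) * (L*B/4) :=
        mul_le_mul_of_nonneg_right hk_le hLB0
      have t2 : T ^ ((2:ℝ)/p) * S ^ ((p-2)/p) * (L*B/4)
          ≤ T ^ ((2:ℝ)/p) * (B ^ ((p-2)/p)/(4*L)) * (L*B/4) :=
        mul_le_mul_of_nonneg_right
          (mul_le_mul_of_nonneg_left hSp (Real.rpow_nonneg hT0.le _)) hLB0
      have t3 : T ^ ((2:ℝ)/p) * (B ^ ((p-2)/p)/(4*L)) * (L*B/4)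
          = T ^ ((2:ℝ)/p) * (B ^ ((p-2)/p) * B) / 16 := by
        field_simp
        ring
      have t4 : (0:ℝ) ≤ T ^ ((2:ℝ)/p) * (B ^ ((p-2)/p) * B) :=
        mul_nonneg (Real.rpow_nonneg hT0.le _) (mul_nonneg (Real.rpow_nonneg hB0.le _) hB0.le)
      linarith
    have hYsq : (T ^ ((1:ℝ)/p) * B ^ ((p-1)/p)) ^ (2:ℝ)
        = T ^ ((2:ℝ)/p) * (B ^ ((p-2)/p) * B) := by
      rw [Real.mul_rpow (Real.rpow_nonneg hT0.le _) (Real.rpow_nonneg hB0.le _),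
        ← Real.rpow_mul hT0.le, ← Real.rpow_mul hB0.le,
        show (1:ℝ)/p*2 = 2/p by ring, show (p-1)/p*2 = (p-2)/p + 1 by field_simp; ring,
        Real.rpow_add hB0, Real.rpow_one]
    calc ∑ i ∈ Finset.range k, (u i) ^ ((1:ℝ)/2)
        ≤ ((k:ℝ)*(L*B/4)) ^ ((1:ℝ)/2) := by rw [← h8]; exact h7
      _ ≤ ((T ^ ((1:ℝ)/p) * B ^ ((p-1)/p)) ^ (2:ℝ)) ^ ((1:ℝ)/2) := by
          rw [hYsq]
          exact Real.rpow_le_rpow (mul_nonneg hknz.le hLB0) hkey (by norm_num)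
      _ = T ^ ((1:ℝ)/p) * B ^ ((p-1)/p) := by
          rw [← Real.rpow_mul hY0, show (2:ℝ)*((1:ℝ)/2) = 1 by norm_num, Real.rpow_one]
  -- conclusion
  have hmain : ∑ i ∈ Finset.range k, (∫ ω, ‖f' (x i ω)‖)
      ≤ 2 * (T ^ ((1:ℝ)/p) * B ^ ((p-1)/p)) := by
    have h1 : ∑ i ∈ Finset.range k, (∫ ω, ‖f' (x i ω)‖)
        ≤ ∑ i ∈ Finset.range k, (lam i * (A i) ^ ((p-1)/p) + (u i) ^ ((1:ℝ)/2)) :=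
      Finset.sum_le_sum fun i _ => hgrad_i i
    rw [Finset.sum_add_distrib] at h1
    linarith [hH1, herr_sum]
  calc (1/(k:ℝ)) * ∑ i ∈ Finset.range k, ∫ ω, ‖f' (x i ω)‖
      ≤ (1/(k:ℝ)) * (2 * (T ^ ((1:ℝ)/p) * B ^ ((p-1)/p))) :=
        mul_le_mul_of_nonneg_left hmain (by positivity)
    _ = 2/(k:ℝ) * T ^ ((1:ℝ)/p) * B ^ ((p-1)/p) := by ring
end
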